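/- arXiv:1104.4938 — 6 statements merged into one kernel-verified Lean document; each statement's English description precedes it below -/
import Mathlib

section
/- For all integers n ≥ 1, the inequalities √(2(n+1)) ≤ 2^n · n! / (2n-1)!! ≤ 2√n hold, where (2n-1)!! = 1·3·5⋯(2n-1). -/
open Nat

/-- `(2n-1)!! = 1·3·5⋯(2n-1)`, the product of the first `n` odd positive integers. -/
def oddDF (n : ℕ) : ℕ := ∏ i ∈ Finset.range n, (2 * i + 1)

lemma oddDF_pos (n : ℕ) : 0 < oddDF n :=
  Finset.prod_pos (fun i _ => by positivity)

lemma oddDF_succ (n : ℕ) : oddDF (n + 1) = oddDF n * (2 * n + 1) :=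
  Finset.prod_range_succ _ _

lemma key (n : ℕ) (hn : 1 ≤ n) :
    2 * ((n : ℝ) + 1) ≤ ((2 : ℝ) ^ n * (n ! : ℝ) / (oddDF n : ℝ)) ^ 2 ∧
      ((2 : ℝ) ^ n * (n ! : ℝ) / (oddDF n : ℝ)) ^ 2 ≤ 4 * n := by
  induction n with
  | zero => omega
  | succ m ih =>
    rcases Nat.eq_zero_or_pos m with hm | hm
    · subst hm
      simp [oddDF]
      norm_num
    · obtain ⟨h1, h2⟩ := ih hm
      have hD : (0 : ℝ) < (oddDF m : ℝ) := by exact_mod_cast oddDF_pos m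
      have hO : (0 : ℝ) < 2 * (m : ℝ) + 1 := by positivity
      have hfm : ((2 : ℝ) ^ (m + 1) * ((m + 1)! : ℝ) / (oddDF (m + 1) : ℝ))
          = ((2 : ℝ) ^ m * (m ! : ℝ) / (oddDF m : ℝ)) * (2 * ((m : ℝ) + 1) / (2 * m + 1)) := by
        rw [oddDF_succ]
        push_cast [Nat.factorial_succ]
        field_simp
        ring
      set x := (2 : ℝ) ^ m * (m ! : ℝ) / (oddDF m : ℝ) with hx
      rw [hfm]
      have hsq : (x * (2 * ((m : ℝ) + 1) / (2 * m + 1))) ^ 2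
          = x ^ 2 * (2 * ((m : ℝ) + 1)) ^ 2 / (2 * m + 1) ^ 2 := by
        field_simp
      rw [hsq]
      push_cast
      constructor
      · rw [le_div_iff₀ (by positivity)]
        nlinarith [sq_nonneg ((m : ℝ) + 1)]
      · rw [div_le_iff₀ (by positivity)]
        nlinarith [sq_nonneg ((m : ℝ))]

theorem stmt0 (n : ℕ) (hn : 1 ≤ n) :
    Real.sqrt (2 * (n + 1)) ≤ (2 : ℝ) ^ n * (n ! : ℝ) / (oddDF n : ℝ) ∧
      (2 : ℝ) ^ n * (n ! : ℝ) / (oddDF n : ℝ) ≤ 2 * Real.sqrt n := by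
  obtain ⟨h1, h2⟩ := key n hn
  have hD : (0 : ℝ) < (oddDF n : ℝ) := by exact_mod_cast oddDF_pos n
  have hx : (0 : ℝ) ≤ (2 : ℝ) ^ n * (n ! : ℝ) / (oddDF n : ℝ) := by positivity
  constructor
  · calc Real.sqrt (2 * (n + 1)) ≤ Real.sqrt (((2 : ℝ) ^ n * (n ! : ℝ) / (oddDF n : ℝ)) ^ 2) :=
        Real.sqrt_le_sqrt h1
      _ = _ := Real.sqrt_sq hx
  · have : (2 : ℝ) ^ n * (n ! : ℝ) / (oddDF n : ℝ) ≤ Real.sqrt (4 * n) := by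
      rw [Real.le_sqrt hx (by positivity)]
      exact h2
    calc _ ≤ Real.sqrt (4 * n) := this
      _ = 2 * Real.sqrt n := by
        rw [show (4 : ℝ) * n = 2 ^ 2 * n by ring, Real.sqrt_mul (by positivity),
          Real.sqrt_sq (by norm_num)]
end

section
/- For all integers n > 1, the identity ∑_{k=1}^{n} C(n-1, k-1) · (2n-2k-1)!! · (2k-2)!! = (2n-1)!! holds. -/
open Nat

/-- `(2n)!! = 2·4⋯(2n)`, the product of the first `n` even positive integers. -/
def evenDF (n : ℕ) : ℕ := ∏ i ∈ Finset.range n, (2 * i + 2)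

lemma evenDF_succ (n : ℕ) : evenDF (n + 1) = evenDF n * (2 * n + 2) :=
  Finset.prod_range_succ _ n

lemma aux (m : ℕ) :
    ∑ j ∈ Finset.range (m + 1), m.choose j * oddDF (m - j) * evenDF j = oddDF (m + 1) := by
  induction m with
  | zero => simp [oddDF, evenDF]
  | succ m ih =>
    have hB : ∑ j ∈ Finset.range (m + 2), m.choose j * oddDF (m + 1 - j) * evenDF j
        = (∑ i ∈ Finset.range (m + 1),
            m.choose (i + 1) * oddDF (m - i) * evenDF (i + 1)) + oddDF (m + 1) := by
      rw [Finset.sum_range_succ' (fun j => m.choose j * oddDF (m + 1 - j) * evenDF j) (m + 1)]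
      simp [oddDF, evenDF]
    have hB' : ∑ j ∈ Finset.range (m + 2), m.choose j * oddDF (m + 1 - j) * evenDF j
        = ∑ j ∈ Finset.range (m + 1),
            m.choose j * oddDF (m - j) * evenDF j * (2 * (m - j) + 1) := by
      rw [Finset.sum_range_succ]
      rw [Nat.choose_succ_self, zero_mul, zero_mul, add_zero]
      refine Finset.sum_congr rfl fun j hj => ?_
      have hj' : j ≤ m := Nat.lt_succ_iff.mp (Finset.mem_range.mp hj)
      rw [show m + 1 - j = (m - j) + 1 by omega, oddDF_succ]
      ring
    -- main computation
    rw [Finset.sum_range_succ' (fun j => (m + 1).choose j * oddDF (m + 1 - j) * evenDF j) (m + 1)]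
    have hsplit : ∀ i, (m + 1).choose (i + 1) * oddDF (m + 1 - (i + 1)) * evenDF (i + 1)
        = m.choose i * oddDF (m - i) * evenDF i * (2 * i + 2)
          + m.choose (i + 1) * oddDF (m - i) * evenDF (i + 1) := by
      intro i
      rw [Nat.choose_succ_succ, show m + 1 - (i + 1) = m - i by omega, evenDF_succ]
      ring
    simp only [hsplit]
    rw [Finset.sum_add_distrib, add_assoc]
    have h0 : (m + 1).choose 0 * oddDF (m + 1 - 0) * evenDF 0 = oddDF (m + 1) := by
      simp [evenDF]
    rw [h0]
    have : (∑ i ∈ Finset.range (m + 1),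
        m.choose (i + 1) * oddDF (m - i) * evenDF (i + 1)) + oddDF (m + 1)
        = ∑ j ∈ Finset.range (m + 1),
            m.choose j * oddDF (m - j) * evenDF j * (2 * (m - j) + 1) := by
      rw [← hB, hB']
    rw [this, ← Finset.sum_add_distrib]
    have : ∀ j ∈ Finset.range (m + 1),
        m.choose j * oddDF (m - j) * evenDF j * (2 * j + 2)
          + m.choose j * oddDF (m - j) * evenDF j * (2 * (m - j) + 1)
        = m.choose j * oddDF (m - j) * evenDF j * (2 * (m + 1) + 1) := by
      intro j hj
      have hj' : j ≤ m := Nat.lt_succ_iff.mp (Finset.mem_range.mp hj)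
      have : m - j + j = m := Nat.sub_add_cancel hj'
      have h23 : (2 * j + 2) + (2 * (m - j) + 1) = 2 * (m + 1) + 1 := by omega
      rw [← Nat.mul_add, h23]
    rw [Finset.sum_congr rfl this, ← Finset.sum_mul, ih, ← oddDF_succ]

theorem stmt1 (n : ℕ) (hn : 1 < n) :
    ∑ k ∈ Finset.Icc 1 n, (n - 1).choose (k - 1) * oddDF (n - k) * evenDF (k - 1) =
      oddDF n := by
  obtain ⟨m, rfl⟩ : ∃ m, n = m + 1 := ⟨n - 1, by omega⟩
  have := aux m
  rw [← aux m]
  refine Finset.sum_bij' (fun k _ => k - 1) (fun j _ => j + 1) ?_ ?_ ?_ ?_ ?_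
  · intro k hk
    simp only [Finset.mem_Icc] at hk
    simp only [Finset.mem_range]; omega
  · intro j hj
    simp only [Finset.mem_range] at hj
    simp only [Finset.mem_Icc]; omega
  · intro k hk
    simp only [Finset.mem_Icc] at hk; omega
  · intro j hj; omega
  · intro k hk
    simp only [Finset.mem_Icc] at hk
    rw [show m + 1 - k = m - (k - 1) by omega, Nat.add_sub_cancel]
end

section
/- Define sequences by the formal power series identity ∑_{n≥0} w_n z^n/(n!)² = exp(∑_{n≥1} u_n z^n/(n!)²) where ∑_{n≥0} w_n z^n/(n!)² = (1-z)^{-1/2} e^{z/2}. Then u_1 = 1 and u_n = n!(n-1)!/2 for all n > 1. -/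
open Nat PowerSeries

/-- The formal exponential `exp f` of a power series `f` with zero constant term,
defined coefficient-wise: the coefficient of `z^n` in `exp f = ∑_k f^k/k!` is
`∑_{k=0}^{n} (coeff of z^n in f^k)/k!` (higher powers of `f` do not contribute). -/
noncomputable def expComp (f : PowerSeries ℚ) : PowerSeries ℚ :=
  PowerSeries.mk fun n =>
    ∑ k ∈ Finset.range (n + 1), (PowerSeries.coeff (R := ℚ) n (f ^ k)) / (k ! : ℚ)

open Finset in
lemma coeff_pow_zero_of_lt {f : ℚ⟦X⟧} (hf : constantCoeff f = 0)
    {j k : ℕ} (h : j < k) : coeff j (f ^ k) = 0 := by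
  obtain ⟨g, rfl⟩ := X_dvd_iff.2 hf
  rw [mul_pow, mul_comm, coeff_mul_X_pow', if_neg (not_le.2 h)]

open Finset in
lemma deriv_expComp {f : ℚ⟦X⟧} (hf : constantCoeff f = 0) :
    d⁄dX ℚ (expComp f) = d⁄dX ℚ f * expComp f := by
  ext n
  have key : ∀ k : ℕ, coeff (n+1) (f ^ (k+1)) / ((k+1)! : ℚ) * (n+1)
      = coeff n (f ^ k * d⁄dX ℚ f) / (k ! : ℚ) := by
    intro k
    have h1 : coeff n (d⁄dX ℚ (f ^ (k+1))) = coeff (n+1) (f ^ (k+1)) * (n+1) :=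
      coeff_derivative _ n
    have h2 : d⁄dX ℚ (f ^ (k+1)) = (k+1) • (f ^ k • d⁄dX ℚ f) := by
      rw [Derivation.leibniz_pow]; simp
    rw [h2, map_nsmul, smul_eq_mul, nsmul_eq_mul] at h1
    push_cast at h1
    have hk : ((k+1)! : ℚ) = (k+1) * (k ! : ℚ) := by
      rw [factorial_succ]; push_cast; ring
    rw [hk, div_mul_eq_mul_div, ← h1, mul_div_mul_left _ _ (by positivity : ((k:ℚ)+1) ≠ 0)]
  rw [coeff_derivative]
  have hL : coeff (n+1) (expComp f) * ((n:ℚ)+1)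
      = ∑ k ∈ range (n+1), coeff n (f ^ k * d⁄dX ℚ f) / (k ! : ℚ) := by
    rw [expComp, coeff_mk, Finset.sum_range_succ']
    simp only [pow_zero, coeff_one, Nat.succ_ne_zero, if_false, zero_div, add_zero,
      Finset.sum_mul]
    exact Finset.sum_congr rfl fun k _ => key k
  have hR : coeff n (d⁄dX ℚ f * expComp f)
      = ∑ k ∈ range (n+1), coeff n (f ^ k * d⁄dX ℚ f) / (k ! : ℚ) := by
    rw [coeff_mul]
    have step : ∀ p ∈ antidiagonal n, coeff p.1 (d⁄dX ℚ f) * coeff p.2 (expComp f)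
        = ∑ k ∈ range (n+1), coeff p.1 (d⁄dX ℚ f) * (coeff p.2 (f ^ k) / (k ! : ℚ)) := by
      intro p hp
      have hp2 : p.2 ≤ n := by
        have := mem_antidiagonal.1 hp; omega
      rw [expComp, coeff_mk, Finset.mul_sum]
      apply Finset.sum_subset (Finset.range_subset_range.2 (by omega))
      intro k hk hnk
      have : p.2 < k := by
        simp only [mem_range] at hk hnk; omega
      rw [coeff_pow_zero_of_lt hf this]; simp
    rw [Finset.sum_congr rfl step, Finset.sum_comm]
    refine Finset.sum_congr rfl fun k _ => ?_
    rw [mul_comm (f ^ k), coeff_mul, Finset.sum_div]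
    exact Finset.sum_congr rfl fun p _ => (mul_div_assoc _ _ _).symm
  rw [hR, ← hL]

lemma coeff_two_mul (g : ℚ⟦X⟧) (n : ℕ) : coeff n (2 * g) = 2 * coeff n g := by
  rw [show (2:ℚ⟦X⟧) = C 2 from (map_ofNat (C (R := ℚ)) 2).symm, coeff_C_mul]

lemma odeA : 2 * d⁄dX ℚ (PowerSeries.mk fun k => ((2 * k).choose k : ℚ) / 4 ^ k)
    = (PowerSeries.mk fun k => ((2 * k).choose k : ℚ) / 4 ^ k)
      + 2 * (X * d⁄dX ℚ (PowerSeries.mk fun k => ((2 * k).choose k : ℚ) / 4 ^ k)) := by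
  ext n
  rw [map_add, coeff_two_mul, coeff_two_mul, coeff_derivative]
  cases n with
  | zero =>
    rw [coeff_zero_X_mul, coeff_mk, coeff_mk]
    norm_num
  | succ n =>
    rw [coeff_succ_X_mul, coeff_derivative, coeff_mk, coeff_mk]
    have hc := Nat.succ_mul_centralBinom_succ (n + 1)
    rw [Nat.centralBinom_eq_two_mul_choose, Nat.centralBinom_eq_two_mul_choose] at hc
    have hc' : ((n:ℚ) + 2) * ((2 * (n+1+1)).choose (n+1+1) : ℚ)
        = (2 * (2 * (n:ℚ) + 3)) * ((2 * (n+1)).choose (n+1) : ℚ) := by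
      exact_mod_cast congrArg (fun m : ℕ => (m : ℚ)) hc
    have h2n : (0:ℚ) < (4:ℚ)^(n+1) := by positivity
    have h4 : (4: ℚ) ^ (n+1+1) = 4 * 4 ^ (n+1) := by ring
    rw [h4]
    field_simp
    push_cast
    nlinarith [hc', h2n]

lemma odeB : 2 * d⁄dX ℚ (PowerSeries.mk fun n => 1 / (2 ^ n * (n ! : ℚ)))
    = PowerSeries.mk fun n => 1 / (2 ^ n * (n ! : ℚ)) := by
  ext n
  rw [coeff_two_mul, coeff_derivative, coeff_mk, coeff_mk]
  have h1 : (2:ℚ) ^ (n+1) = 2 * 2 ^ n := by ring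
  have h2 : ((n+1)! : ℚ) = ((n:ℚ)+1) * (n ! : ℚ) := by rw [factorial_succ]; push_cast; ring
  have hn : (0:ℚ) < (n ! : ℚ) := by exact_mod_cast Nat.factorial_pos n
  have h2n : (0:ℚ) < (2:ℚ)^n := by positivity
  rw [h1, h2]
  field_simp

lemma odeW (A B : ℚ⟦X⟧) (hA : 2 * d⁄dX ℚ A = A + 2 * (X * d⁄dX ℚ A))
    (hB : 2 * d⁄dX ℚ B = B) :
    2 * d⁄dX ℚ (A * B) = 2 * (X * d⁄dX ℚ (A * B)) + 2 * (A * B) - X * (A * B) := by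
  have hL : d⁄dX ℚ (A * B) = A * d⁄dX ℚ B + B * d⁄dX ℚ A := by
    rw [Derivation.leibniz]; simp [smul_eq_mul]
  rw [hL]
  linear_combination B * hA + (A - X * A) * hB

theorem stmt5 (w u : ℕ → ℚ)
    (hwgf : PowerSeries.mk (fun n => w n / (n ! : ℚ) ^ 2) =
      (PowerSeries.mk fun k => ((2 * k).choose k : ℚ) / 4 ^ k) *
        (PowerSeries.mk fun n => 1 / (2 ^ n * (n ! : ℚ))))
    (hexp : PowerSeries.mk (fun n => w n / (n ! : ℚ) ^ 2) =
      expComp (PowerSeries.mk fun n => if n = 0 then 0 else u n / (n ! : ℚ) ^ 2)) :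
    u 1 = 1 ∧ ∀ n : ℕ, 1 < n → u n = (n ! : ℚ) * ((n - 1)! : ℚ) / 2 := by
  set U := (PowerSeries.mk fun n => if n = 0 then 0 else u n / (n ! : ℚ) ^ 2) with hUdef
  set W := (PowerSeries.mk fun n => w n / (n ! : ℚ) ^ 2) with hWdef
  have hU0 : constantCoeff U = 0 := by rw [hUdef, constantCoeff_mk]; simp
  have hDW : d⁄dX ℚ W = d⁄dX ℚ U * W := by
    rw [hexp, deriv_expComp hU0]
  have hODE : 2 * d⁄dX ℚ W = 2 * (X * d⁄dX ℚ W) + 2 * W - X * W := by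
    rw [hwgf]; exact odeW _ _ odeA odeB
  rw [hDW] at hODE
  have hzero : (2 * d⁄dX ℚ U - 2 * (X * d⁄dX ℚ U) - 2 + X) * W = 0 := by
    linear_combination hODE
  have hW1 : constantCoeff W = 1 := by
    rw [hwgf, map_mul, constantCoeff_mk, constantCoeff_mk]; norm_num
  have hWne : W ≠ 0 := fun h => by rw [h, map_zero] at hW1; norm_num at hW1
  have hpoly : 2 * d⁄dX ℚ U - 2 * (X * d⁄dX ℚ U) - 2 + X = 0 :=
    (mul_eq_zero.1 hzero).resolve_right hWne
  have hc : ∀ n : ℕ, coeff n (2 * d⁄dX ℚ U - 2 * (X * d⁄dX ℚ U) - 2 + X) = 0 :=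
    fun n => by rw [hpoly, map_zero]
  have e : ∀ n : ℕ, 2 * (u (n+1) / (((n+1)! : ℚ))^2 * ((n:ℚ)+1))
      - 2 * coeff n (X * d⁄dX ℚ U)
      - (if n = 0 then (2:ℚ) else 0) + (if n = 1 then (1:ℚ) else 0) = 0 := by
    intro n
    have h := hc n
    rw [map_add, map_sub, map_sub, coeff_two_mul, coeff_two_mul, coeff_derivative,
      coeff_X] at h
    rw [show (2:ℚ⟦X⟧) = C 2 from (map_ofNat (C (R := ℚ)) 2).symm, coeff_C] at h
    rw [hUdef, coeff_mk] at h
    simpa using h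
  have hu1 : u 1 = 1 := by
    have h := e 0
    rw [coeff_zero_X_mul] at h
    norm_num at h
    linarith
  have hrecDU : ∀ n : ℕ, coeff (n+1) (X * d⁄dX ℚ U)
      = u (n+1) / (((n+1)! : ℚ))^2 * ((n:ℚ)+1) := by
    intro n
    rw [coeff_succ_X_mul, coeff_derivative, hUdef, coeff_mk]
    simp
  have hu2 : u 2 = 1 := by
    have h := e 1
    rw [hrecDU 0, hu1] at h
    norm_num at h
    linarith
  have hrec : ∀ n : ℕ, 2 ≤ n → u (n+1) / (((n+1)! : ℚ))^2 * ((n:ℚ)+1)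
      = u n / ((n ! : ℚ))^2 * (n:ℚ) := by
    intro n hn
    obtain ⟨m, rfl⟩ : ∃ m, n = m + 1 := ⟨n - 1, by omega⟩
    have h := e (m+1)
    rw [hrecDU m] at h
    have h0 : (m+1 : ℕ) ≠ 0 := by omega
    have h1 : (m+1 : ℕ) ≠ 1 := by omega
    rw [if_neg h0, if_neg h1] at h
    push_cast at h ⊢
    linarith
  refine ⟨hu1, ?_⟩
  have main : ∀ n : ℕ, 2 ≤ n → u n = (n ! : ℚ) * (((n-1)! : ℚ)) / 2 := by
    intro n hn
    induction n, hn using Nat.le_induction with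
    | base => simpa using hu2
    | succ n hn ih =>
      have h := hrec n hn
      rw [ih] at h
      have hfn : (0:ℚ) < (n ! : ℚ) := by exact_mod_cast Nat.factorial_pos n
      have hfn1 : (0:ℚ) < ((n+1)! : ℚ) := by exact_mod_cast Nat.factorial_pos (n+1)
      have hfs : ((n+1)! : ℚ) = ((n:ℚ)+1) * (n ! : ℚ) := by
        rw [factorial_succ]; push_cast; ring
      have hfp : ((n:ℚ)) * (((n-1)! : ℚ)) = (n ! : ℚ) := by
        exact_mod_cast congrArg (fun m : ℕ => (m:ℚ)) (Nat.mul_factorial_pred (by omega : n ≠ 0))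
      have hsub : (n + 1 - 1 : ℕ) = n := by omega
      rw [hsub, hfs]
      field_simp [hfs] at h
      have hne : ((n:ℚ)+1)*((n !:ℚ))^2 ≠ 0 := by positivity
      apply mul_left_cancel₀ hne
      rw [hfs] at h
      linear_combination ((n !:ℚ)/2) * h + (((n:ℚ)+1)^2*((n !:ℚ))^3/2) * hfp
  exact fun n hn => main n (by omega)
end

section
/- Let d ≥ 2 and define v_n(d) for n ≥ 1 by v_1(d) = 1 and, for n > 1, by the recurrence ∑_{k=1}^{n} C(n-1,k-1) ((2n-2k-1)!!)^{d-1} v_k(d) = ((2n-1)!!)^{d-1}. Then v_n(2) = 2^{n-1}·(n-1)! for all n ≥ 2. -/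
open Nat

lemma keyNat : ∀ m : ℕ, ∑ i ∈ Finset.range (m+1),
    m.choose i * (m-i)! * oddDF i * 2^(m-i) = oddDF (m+1) := by
  intro m
  induction m with
  | zero => simp [oddDF]
  | succ m ih =>
    rw [Finset.sum_range_succ]
    have hterm : ∀ i ∈ Finset.range (m+1),
        (m+1).choose i * (m+1-i)! * oddDF i * 2^(m+1-i)
          = 2*(m+1) * (m.choose i * (m-i)! * oddDF i * 2^(m-i)) := by
      intro i hi
      have hi' : i ≤ m := by simpa [Nat.lt_succ_iff] using hi
      have h1 : (m+1).choose i * (m+1-i)! = (m+1) * (m.choose i * (m-i)!) := by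
        apply Nat.eq_of_mul_eq_mul_right (Nat.factorial_pos i)
        have e1 := Nat.choose_mul_factorial_mul_factorial (le_trans hi' (le_succ m))
        have e2 := Nat.choose_mul_factorial_mul_factorial hi'
        calc (m+1).choose i * (m+1-i)! * i !
            = (m+1).choose i * i ! * (m+1-i)! := by ring
          _ = (m+1)! := e1
          _ = (m+1) * m ! := Nat.factorial_succ m
          _ = (m+1) * (m.choose i * i ! * (m-i)!) := by rw [e2]
          _ = (m+1) * (m.choose i * (m-i)!) * i ! := by ring
      rw [h1, show m+1-i = (m-i)+1 from by omega, pow_succ]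
      ring
    rw [Finset.sum_congr rfl hterm, ← Finset.mul_sum, ih]
    simp only [Nat.choose_self, oddDF, Finset.prod_range_succ, Nat.sub_self,
      Nat.factorial_zero, pow_zero]
    ring

lemma keyNat2 (m : ℕ) : ∑ i ∈ Finset.range (m+1),
    m.choose i * i ! * oddDF (m-i) * 2^i = oddDF (m+1) := by
  rw [← keyNat m, ← Finset.sum_range_reflect
    (fun j => m.choose j * (m-j)! * oddDF j * 2^(m-j)) (m+1)]
  apply Finset.sum_congr rfl
  intro i hi
  simp only [Finset.mem_range, Nat.lt_succ_iff] at hi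
  rw [show m+1-1-i = m-i from by omega, Nat.choose_symm hi,
    show m-(m-i) = i from by omega]

theorem stmt7 (v : ℕ → ℕ → ℚ)
    (hv1 : ∀ d : ℕ, 2 ≤ d → v d 1 = 1)
    (hrec : ∀ d : ℕ, 2 ≤ d → ∀ n : ℕ, 1 < n →
      ∑ k ∈ Finset.Icc 1 n,
          ((n - 1).choose (k - 1) : ℚ) * (oddDF (n - k) : ℚ) ^ (d - 1) * v d k =
        (oddDF n : ℚ) ^ (d - 1)) :
    ∀ n : ℕ, 2 ≤ n → v 2 n = 2 ^ (n - 1) * ((n - 1)! : ℚ) := by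
  suffices h : ∀ n : ℕ, 1 ≤ n → v 2 n = 2 ^ (n-1) * ((n-1)! : ℚ) from
    fun n hn => h n (by omega)
  intro n
  induction n using Nat.strong_induction_on with
  | _ n ih =>
    intro hn
    rcases eq_or_lt_of_le hn with h1 | h1
    · rw [← h1, hv1 2 le_rfl]; norm_num
    · have hr := hrec 2 le_rfl n h1
      simp only [show (2:ℕ)-1 = 1 from rfl, pow_one] at hr
      have hq : ∑ k ∈ Finset.Icc 1 n,
          ((n - 1).choose (k - 1) : ℚ) * (oddDF (n - k) : ℚ) *
            (2 ^ (k-1) * ((k-1)! : ℚ)) = (oddDF n : ℚ) := by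
        have hnat := keyNat2 (n-1)
        rw [show n-1+1 = n from by omega] at hnat
        rw [← Finset.Ico_add_one_right_eq_Icc, Finset.sum_Ico_eq_sum_range, show n+1-1 = n from by omega]
        calc ∑ i ∈ Finset.range n,
              ((n - 1).choose (1+i-1) : ℚ) * (oddDF (n - (1+i)) : ℚ) *
                (2 ^ (1+i-1) * ((1+i-1)! : ℚ))
            = ∑ i ∈ Finset.range n,
              (((n-1).choose i * i ! * oddDF (n-1-i) * 2^i : ℕ) : ℚ) := by
              apply Finset.sum_congr rfl
              intro i hi
              rw [show 1+i-1 = i from by omega, show n-(1+i) = n-1-i from by omega]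
              push_cast
              ring
          _ = (oddDF n : ℚ) := by rw [← Nat.cast_sum, hnat]
      -- split off the k = n term in both sums
      have hsplit : ∀ f : ℕ → ℚ, ∑ k ∈ Finset.Icc 1 n, f k
          = (∑ k ∈ Finset.Icc 1 (n-1), f k) + f n := by
        intro f
        rw [show n = (n-1)+1 from by omega, Finset.sum_Icc_succ_top (by omega),
          Nat.add_sub_cancel]
      rw [hsplit] at hr hq
      have hlast : ((n - 1).choose (n - 1) : ℚ) * (oddDF (n - n) : ℚ) = 1 := by
        simp [oddDF]
      have heq : ∑ k ∈ Finset.Icc 1 (n-1),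
          ((n - 1).choose (k - 1) : ℚ) * (oddDF (n - k) : ℚ) * v 2 k
          = ∑ k ∈ Finset.Icc 1 (n-1),
          ((n - 1).choose (k - 1) : ℚ) * (oddDF (n - k) : ℚ) *
            (2 ^ (k-1) * ((k-1)! : ℚ)) := by
        apply Finset.sum_congr rfl
        intro k hk
        simp only [Finset.mem_Icc] at hk
        rw [ih k (by omega) hk.1]
      rw [heq, hlast, one_mul] at hr
      rw [hlast, one_mul] at hq
      linarith
end

section
/- Fix d ≥ 2 and n ≥ 2. Fix the standard fixed-point-free involution t₁ = (1,2)(3,4)⋯(2n-1,2n) on {1,…,2n}. The number of (d-1)-tuples (t₂,…,t_d) of fixed-point-free involutions on {1,…,2n} such that the orbit of the point 1 under the group ⟨t₁,…,t_d⟩ has size 2k equals C(n-1,k-1)·((2n-2k-1)!!)^{d-1}·v_k(d), where v_k(d) is the number of (d-1)-tuples (s₂,…,s_k) of fixed-point-free involutions on a set of size 2k which together with a fixed standard fixed-point-free involution generate a transitive group. -/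
open Nat

/-- The standard fixed-point-free involution `(1,2)(3,4)⋯(2n-1,2n)` on `{0,…,2n-1}`:
it exchanges `2j` and `2j+1` for each `j`. -/
def stdInv (n : ℕ) : Equiv.Perm (Fin (2 * n)) :=
  Function.Involutive.toPerm
    (fun i => ⟨2 * (i.val / 2) + (1 - i.val % 2), by omega⟩)
    (by intro i; ext; simp; omega)

/-- A fixed-point-free involution: a permutation of order dividing 2 with no fixed points. -/
def IsFpfInv {α : Type*} (σ : Equiv.Perm α) : Prop :=
  σ ^ 2 = 1 ∧ ∀ x, σ x ≠ x

/-- The subgroup generated by a set `S` of permutations acts transitively. -/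
def GenTransitive {α : Type*} (S : Set (Equiv.Perm α)) : Prop :=
  ∀ x y : α, ∃ g ∈ Subgroup.closure S, g x = y

namespace Stmt9Aux

open Equiv

variable {α β : Type*}

/-- `Equiv.permCongr` as a `MulEquiv`. -/
def permCongrM (e : α ≃ β) : Equiv.Perm α ≃* Equiv.Perm β where
  toEquiv := e.permCongr
  map_mul' σ τ := by
    ext x
    simp [Equiv.permCongr_apply, Equiv.Perm.mul_apply]

@[simp] lemma permCongrM_apply (e : α ≃ β) (σ : Equiv.Perm α) (x : β) :
    permCongrM e σ x = e (σ (e.symm x)) := rfl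

lemma isFpfInv_iff (σ : Equiv.Perm α) :
    IsFpfInv σ ↔ (∀ x, σ (σ x) = x) ∧ ∀ x, σ x ≠ x := by
  constructor
  · rintro ⟨h1, h2⟩
    refine ⟨fun x => ?_, h2⟩
    have := DFunLike.congr_fun h1 x
    simpa [pow_succ, Equiv.Perm.mul_apply] using this
  · rintro ⟨h1, h2⟩
    refine ⟨?_, h2⟩
    ext x
    simp [pow_succ, Equiv.Perm.mul_apply, h1]

lemma IsFpfInv.congr (e : α ≃ β) {σ : Equiv.Perm α} (h : IsFpfInv σ) :
    IsFpfInv (e.permCongr σ) := by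
  rw [isFpfInv_iff] at h ⊢
  refine ⟨fun x => ?_, fun x hx => ?_⟩
  · simp [h.1]
  · exact h.2 (e.symm x) (by
      have : e (σ (e.symm x)) = x := hx
      simpa using congrArg e.symm this)

lemma isFpfInv_congr_iff (e : α ≃ β) (σ : Equiv.Perm α) :
    IsFpfInv (e.permCongr σ) ↔ IsFpfInv σ := by
  constructor
  · intro h
    have h2 := IsFpfInv.congr e.symm h
    have h3 : e.symm.permCongr (e.permCongr σ) = σ := by ext x; simp
    rwa [h3] at h2
  · exact IsFpfInv.congr e

lemma permCongr_image_closure (e : α ≃ β) (S : Set (Equiv.Perm α)) :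
    Subgroup.closure ((fun σ => e.permCongr σ) '' S)
      = (Subgroup.closure S).map (permCongrM e).toMonoidHom := by
  rw [MonoidHom.map_closure]
  rfl

lemma mem_closure_image (e : α ≃ β) (S : Set (Equiv.Perm α)) (g : Equiv.Perm α) :
    e.permCongr g ∈ Subgroup.closure ((fun σ => e.permCongr σ) '' S)
      ↔ g ∈ Subgroup.closure S := by
  rw [permCongr_image_closure]
  rw [show (e.permCongr g) = (permCongrM e) g from rfl, Subgroup.mem_map_equiv]
  simp only [MulEquiv.symm_apply_apply]

lemma genTransitive_image (e : α ≃ β) {S : Set (Equiv.Perm α)} (h : GenTransitive S) :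
    GenTransitive ((fun σ => e.permCongr σ) '' S) := by
  intro x y
  obtain ⟨g, hg, hgx⟩ := h (e.symm x) (e.symm y)
  refine ⟨e.permCongr g, (mem_closure_image e S g).mpr hg, ?_⟩
  simp [Equiv.permCongr_apply, hgx]

lemma permCongr_symm_image (e : α ≃ β) (S : Set (Equiv.Perm α)) :
    (fun σ => e.symm.permCongr σ) '' ((fun σ => e.permCongr σ) '' S) = S := by
  rw [Set.image_image]
  have h3 : ∀ σ : Equiv.Perm α, e.symm.permCongr (e.permCongr σ) = σ := by
    intro σ; ext x; simp
  simp [h3]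

lemma genTransitive_image_iff (e : α ≃ β) (S : Set (Equiv.Perm α)) :
    GenTransitive ((fun σ => e.permCongr σ) '' S) ↔ GenTransitive S := by
  constructor
  · intro h
    have := genTransitive_image e.symm h
    rwa [permCongr_symm_image] at this
  · exact genTransitive_image e

lemma orbit_image (e : α ≃ β) (S : Set (Equiv.Perm α)) (x : α) :
    MulAction.orbit (Subgroup.closure ((fun σ => e.permCongr σ) '' S)) (e x)
      = e '' MulAction.orbit (Subgroup.closure S) x := by
  ext y
  constructor
  · rintro ⟨⟨g', hg'⟩, rfl⟩
    rw [permCongr_image_closure] at hg'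
    obtain ⟨g, hg, rfl⟩ := hg'
    exact ⟨g x, ⟨⟨g, hg⟩, rfl⟩, by simp [Equiv.Perm.smul_def]⟩
  · rintro ⟨z, ⟨⟨g, hg⟩, rfl⟩, rfl⟩
    refine ⟨⟨e.permCongr g, (mem_closure_image e S g).mpr hg⟩, ?_⟩
    simp [Equiv.Perm.smul_def]

lemma card_orbit_image (e : α ≃ β) (S : Set (Equiv.Perm α)) (x : α) :
    Nat.card (MulAction.orbit (Subgroup.closure ((fun σ => e.permCongr σ) '' S)) (e x))
      = Nat.card (MulAction.orbit (Subgroup.closure S) x) := by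
  rw [orbit_image, Nat.card_coe_set_eq, Nat.card_coe_set_eq,
    Set.ncard_image_of_injective _ e.injective]



lemma card_fpf_congr (e : α ≃ β) :
    Nat.card {σ : Equiv.Perm α // IsFpfInv σ} = Nat.card {σ : Equiv.Perm β // IsFpfInv σ} :=
  Nat.card_congr (Equiv.subtypeEquiv e.permCongr fun σ => (isFpfInv_congr_iff e σ).symm)

lemma nat_card_sigma {ι : Type*} [Fintype ι] (F : ι → Type*) [∀ i, Finite (F i)] :
    Nat.card (Σ i, F i) = ∑ i, Nat.card (F i) := by
  letI : ∀ i, Fintype (F i) := fun i => Fintype.ofFinite _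
  rw [Nat.card_eq_fintype_card, Fintype.card_sigma]
  simp [Nat.card_eq_fintype_card]

lemma fpf_apply_apply {σ : Equiv.Perm α} (hσ : IsFpfInv σ) (x : α) : σ (σ x) = x :=
  ((isFpfInv_iff σ).mp hσ).1 x

lemma fpf_pres {σ : Equiv.Perm α} (hσ : IsFpfInv σ) {a y : α} (ha : σ a = y) :
    ∀ x, (x ≠ a ∧ x ≠ y) ↔ (σ x ≠ a ∧ σ x ≠ y) := by
  have hsy : σ y = a := by rw [← ha]; exact fpf_apply_apply hσ a
  intro x
  constructor
  · rintro ⟨h1, h2⟩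
    exact ⟨fun h => h2 (σ.injective (h.trans hsy.symm)),
           fun h => h1 (σ.injective (h.trans ha.symm))⟩
  · rintro ⟨h1, h2⟩
    constructor
    · rintro rfl; exact h2 ha
    · rintro rfl; exact h1 hsy

lemma fpf_subtypePerm {p : α → Prop} {σ : Equiv.Perm α} (hσ : IsFpfInv σ)
    (h : ∀ x, p (σ x) ↔ p x) : IsFpfInv (σ.subtypePerm h) := by
  rw [isFpfInv_iff] at hσ ⊢
  refine ⟨fun x => Subtype.ext ?_, fun x hx => hσ.2 x.1 ?_⟩
  · simp [Equiv.Perm.subtypePerm_apply, hσ.1]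
  · simpa [Equiv.Perm.subtypePerm_apply] using congrArg Subtype.val hx

section Ext
variable [DecidableEq α]

def extPerm (a y : α) (τ : Equiv.Perm {x : α // x ≠ a ∧ x ≠ y}) : Equiv.Perm α :=
  Equiv.swap a y * Equiv.Perm.subtypeCongr τ 1

lemma extPerm_apply_mem (a y : α) (τ : Equiv.Perm {x : α // x ≠ a ∧ x ≠ y})
    {x : α} (hx : x ≠ a ∧ x ≠ y) : extPerm a y τ x = τ ⟨x, hx⟩ := by
  unfold extPerm
  rw [Equiv.Perm.mul_apply, Equiv.Perm.subtypeCongr.apply, dif_pos hx]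
  exact Equiv.swap_apply_of_ne_of_ne (τ ⟨x, hx⟩).2.1 (τ ⟨x, hx⟩).2.2

lemma extPerm_apply_a (a y : α) (τ : Equiv.Perm {x : α // x ≠ a ∧ x ≠ y}) :
    extPerm a y τ a = y := by
  unfold extPerm
  rw [Equiv.Perm.mul_apply, Equiv.Perm.subtypeCongr.apply, dif_neg (by simp)]
  simp

lemma extPerm_apply_y (a y : α) (hy : y ≠ a) (τ : Equiv.Perm {x : α // x ≠ a ∧ x ≠ y}) :
    extPerm a y τ y = a := by
  unfold extPerm
  rw [Equiv.Perm.mul_apply, Equiv.Perm.subtypeCongr.apply, dif_neg (by simp)]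
  simp [Equiv.swap_apply_of_ne_of_ne, hy]

lemma fpf_extPerm {a y : α} (hy : y ≠ a) {τ : Equiv.Perm {x : α // x ≠ a ∧ x ≠ y}}
    (hτ : IsFpfInv τ) : IsFpfInv (extPerm a y τ) := by
  rw [isFpfInv_iff] at hτ ⊢
  constructor
  · intro x
    by_cases hx : x ≠ a ∧ x ≠ y
    · rw [extPerm_apply_mem a y τ hx, extPerm_apply_mem a y τ (τ ⟨x, hx⟩).2]
      exact congrArg Subtype.val (hτ.1 ⟨x, hx⟩)
    · by_cases hxa : x = a
      · rw [hxa, extPerm_apply_a, extPerm_apply_y a y hy]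
      · have hxy : x = y := by tauto
        rw [hxy, extPerm_apply_y a y hy, extPerm_apply_a]
  · intro x
    by_cases hx : x ≠ a ∧ x ≠ y
    · rw [extPerm_apply_mem a y τ hx]
      exact fun h => hτ.2 ⟨x, hx⟩ (Subtype.ext h)
    · by_cases hxa : x = a
      · rw [hxa, extPerm_apply_a]; exact hy
      · have hxy : x = y := by tauto
        rw [hxy, extPerm_apply_y a y hy]
        exact fun h => hy h.symm
  
def fpfFiberEquiv (a y : α) (hy : y ≠ a) :
    {σ : Equiv.Perm α // IsFpfInv σ ∧ σ a = y}
      ≃ {τ : Equiv.Perm {x : α // x ≠ a ∧ x ≠ y} // IsFpfInv τ} where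
  toFun σ := ⟨σ.1.subtypePerm (fun x => (fpf_pres σ.2.1 σ.2.2 x).symm), fpf_subtypePerm σ.2.1 _⟩
  invFun τ := ⟨extPerm a y τ.1, fpf_extPerm hy τ.2, extPerm_apply_a a y τ.1⟩
  left_inv := by
    rintro ⟨σ, hσ, ha⟩
    refine Subtype.ext (Equiv.ext fun x => ?_)
    by_cases hx : x ≠ a ∧ x ≠ y
    · rw [extPerm_apply_mem _ _ _ hx]; rfl
    · by_cases hxa : x = a
      · rw [hxa, extPerm_apply_a]; exact ha.symm
      · have hxy : x = y := by tauto
        rw [hxy, extPerm_apply_y a y hy]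
        have h5 : σ y = a := by rw [← ha]; exact fpf_apply_apply hσ a
        exact h5.symm
  right_inv := by
    rintro ⟨τ, hτ⟩
    refine Subtype.ext (Equiv.ext fun x => Subtype.ext ?_)
    rw [Equiv.Perm.subtypePerm_apply]
    exact extPerm_apply_mem a y τ x.2

end Ext

lemma card_fpf : ∀ (m : ℕ) (α : Type) [Fintype α] [DecidableEq α],
    Fintype.card α = 2 * m → Nat.card {σ : Equiv.Perm α // IsFpfInv σ} = oddDF m := by
  intro m
  induction m with
  | zero =>
    intro α _ _ hcard
    have he : IsEmpty α := Fintype.card_eq_zero_iff.mp (by omega)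
    haveI : Unique {σ : Equiv.Perm α // IsFpfInv σ} :=
      { default := ⟨1, one_pow 2, fun x => isEmptyElim x⟩
        uniq := fun σ => Subtype.ext (Equiv.ext fun x => isEmptyElim x) }
    rw [Nat.card_unique]
    simp [oddDF]
  | succ m ih =>
    intro α _ _ hcard
    have hne : Nonempty α := Fintype.card_pos_iff.mp (by omega)
    obtain ⟨a⟩ := hne
    have key : ∀ y : {y : α // y ≠ a},
        Nat.card {σ : {σ : Equiv.Perm α // IsFpfInv σ} // σ.1 a = (y : α)} = oddDF m := by
      intro y
      have e1 : {σ : {σ : Equiv.Perm α // IsFpfInv σ} // σ.1 a = (y : α)}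
          ≃ {σ : Equiv.Perm α // IsFpfInv σ ∧ σ a = (y : α)} :=
        { toFun := fun p => ⟨p.1.1, p.1.2, p.2⟩
          invFun := fun p => ⟨⟨p.1, p.2.1⟩, p.2.2⟩
          left_inv := fun p => rfl
          right_inv := fun p => rfl }
      rw [Nat.card_congr (e1.trans (fpfFiberEquiv a (y : α) y.2))]
      refine ih _ ?_
      have h2 : (Finset.univ.filter fun x : α => x ≠ a ∧ x ≠ (y : α))
          = Finset.univ \ {a, (y : α)} := by
        ext x
        simp [Finset.mem_sdiff, not_or]
      rw [Fintype.card_subtype, h2, Finset.card_sdiff_of_subset (Finset.subset_univ _)]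
      rw [Finset.card_insert_of_notMem (by simp [Ne.symm y.2]), Finset.card_singleton]
      simp [hcard]
      omega
    have hcy : Fintype.card {y : α // y ≠ a} = 2 * m + 1 := by
      have h2 : (Finset.univ.filter fun x : α => x ≠ a) = Finset.univ.erase a := by
        ext x; simp [Finset.mem_erase]
      rw [Fintype.card_subtype, h2, Finset.card_erase_of_mem (Finset.mem_univ a)]
      simp [hcard]
      omega
    set f : {σ : Equiv.Perm α // IsFpfInv σ} → {y : α // y ≠ a} :=
      fun σ => ⟨σ.1 a, σ.2.2 a⟩ with hf
    have e0 : {σ : Equiv.Perm α // IsFpfInv σ} ≃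
        Σ y : {y : α // y ≠ a}, {σ : {σ : Equiv.Perm α // IsFpfInv σ} // f σ = y} :=
      (Equiv.sigmaFiberEquiv f).symm
    have e2 : ∀ y : {y : α // y ≠ a},
        {σ : {σ : Equiv.Perm α // IsFpfInv σ} // f σ = y}
          ≃ {σ : {σ : Equiv.Perm α // IsFpfInv σ} // σ.1 a = (y : α)} :=
      fun y => Equiv.subtypeEquivRight fun σ => by
        simp [hf, Subtype.ext_iff]
    rw [Nat.card_congr e0, nat_card_sigma]
    calc (∑ y : {y : α // y ≠ a},
          Nat.card {σ : {σ : Equiv.Perm α // IsFpfInv σ} // f σ = y})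
        = ∑ y : {y : α // y ≠ a}, oddDF m := by
          refine Finset.sum_congr rfl fun y _ => ?_
          rw [Nat.card_congr (e2 y), key y]
      _ = oddDF (m + 1) := by
          rw [Finset.sum_const, Finset.card_univ, hcy, smul_eq_mul]
          rw [oddDF, oddDF, Finset.prod_range_succ]
          ring



/-! ### Section 3: the product model and transport -/

def flipP (n : ℕ) : Equiv.Perm (Fin n × Bool) :=
  Function.Involutive.toPerm (fun x => (x.1, !x.2)) (fun x => by simp)

@[simp] lemma flipP_apply (n : ℕ) (x : Fin n × Bool) : flipP n x = (x.1, !x.2) := rfl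

lemma fpf_flipP (n : ℕ) : IsFpfInv (flipP n) := by
  rw [isFpfInv_iff]
  refine ⟨fun x => by simp, fun x hx => ?_⟩
  have := congrArg Prod.snd hx
  simp at this

lemma mem_orbit_closure_iff {α : Type*} (S : Set (Equiv.Perm α)) (x y : α) :
    y ∈ MulAction.orbit (Subgroup.closure S) x ↔ ∃ g ∈ Subgroup.closure S, g x = y := by
  constructor
  · rintro ⟨⟨g, hg⟩, rfl⟩; exact ⟨g, hg, rfl⟩
  · rintro ⟨g, hg, rfl⟩; exact ⟨⟨g, hg⟩, rfl⟩

lemma orbit_pres {α : Type*} {S : Set (Equiv.Perm α)} {x₀ : α} {g : Equiv.Perm α}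
    (hg : g ∈ Subgroup.closure S) (x : α) :
    x ∈ MulAction.orbit (Subgroup.closure S) x₀
      ↔ g x ∈ MulAction.orbit (Subgroup.closure S) x₀ := by
  rw [mem_orbit_closure_iff, mem_orbit_closure_iff]
  constructor
  · rintro ⟨h, hh, rfl⟩
    exact ⟨g * h, mul_mem hg hh, rfl⟩
  · rintro ⟨h, hh, heq⟩
    refine ⟨g⁻¹ * h, mul_mem (inv_mem hg) hh, ?_⟩
    rw [Equiv.Perm.mul_apply, heq, Equiv.Perm.coe_inv, Equiv.symm_apply_apply]

lemma agree_closure {α : Type*} {P : α → Prop} {S : Set (Equiv.Perm α)}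
    {S' : Set (Equiv.Perm {x // P x})}
    (h : ∀ g ∈ S, ∃ g' ∈ S', ∀ x : {x // P x}, g x.1 = ((g' x : {x // P x}) : α))
    {g : Equiv.Perm α} (hg : g ∈ Subgroup.closure S) :
    ∃ g' ∈ Subgroup.closure S', ∀ x : {x // P x}, g x.1 = ((g' x : {x // P x}) : α) := by
  induction hg using Subgroup.closure_induction with
  | mem g hgS =>
      obtain ⟨g', h1, h2⟩ := h g hgS
      exact ⟨g', Subgroup.subset_closure h1, h2⟩
  | one => exact ⟨1, one_mem _, fun x => rfl⟩
  | mul g₁ g₂ hg₁ hg₂ ih₁ ih₂ =>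
      obtain ⟨g₁', m1, a1⟩ := ih₁
      obtain ⟨g₂', m2, a2⟩ := ih₂
      refine ⟨g₁' * g₂', mul_mem m1 m2, fun x => ?_⟩
      rw [Equiv.Perm.mul_apply, Equiv.Perm.mul_apply, a2 x]
      exact a1 (g₂' x)
  | inv g₁ hg₁ ih =>
      obtain ⟨g₁', m1, a1⟩ := ih
      refine ⟨g₁'⁻¹, inv_mem m1, fun x => ?_⟩
      have h2 := a1 (g₁'⁻¹ x)
      rw [Equiv.Perm.coe_inv, Equiv.apply_symm_apply] at h2
      rw [← h2, Equiv.Perm.coe_inv, Equiv.symm_apply_apply]; rfl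

lemma agree_closure' {α : Type*} {P : α → Prop} {S : Set (Equiv.Perm α)}
    {S' : Set (Equiv.Perm {x // P x})}
    (h : ∀ g' ∈ S', ∃ g ∈ S, ∀ x : {x // P x}, g x.1 = ((g' x : {x // P x}) : α))
    {g' : Equiv.Perm {x // P x}} (hg' : g' ∈ Subgroup.closure S') :
    ∃ g ∈ Subgroup.closure S, ∀ x : {x // P x}, g x.1 = ((g' x : {x // P x}) : α) := by
  induction hg' using Subgroup.closure_induction with
  | mem g hgS =>
      obtain ⟨g, h1, h2⟩ := h _ hgS
      exact ⟨g, Subgroup.subset_closure h1, h2⟩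
  | one => exact ⟨1, one_mem _, fun x => rfl⟩
  | mul g₁' g₂' hg₁ hg₂ ih₁ ih₂ =>
      obtain ⟨g₁, m1, a1⟩ := ih₁
      obtain ⟨g₂, m2, a2⟩ := ih₂
      refine ⟨g₁ * g₂, mul_mem m1 m2, fun x => ?_⟩
      rw [Equiv.Perm.mul_apply, Equiv.Perm.mul_apply, a2 x]
      exact a1 (g₂' x)
  | inv g₁' hg₁ ih =>
      obtain ⟨g₁, m1, a1⟩ := ih
      refine ⟨g₁⁻¹, inv_mem m1, fun x => ?_⟩
      have h2 := a1 (g₁'⁻¹ x)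
      rw [Equiv.Perm.coe_inv, Equiv.apply_symm_apply] at h2
      rw [← h2, Equiv.Perm.coe_inv, Equiv.symm_apply_apply]; rfl

section MainN

variable {n : ℕ}

/-- splitting a subtype of a product -/
def subProd (p : Fin n → Prop) : {x : Fin n × Bool // p x.1} ≃ ({q : Fin n // p q} × Bool) where
  toFun x := (⟨x.1.1, x.2⟩, x.1.2)
  invFun y := ⟨(y.1.1, y.2), y.1.2⟩
  left_inv x := rfl
  right_inv y := rfl

def bE {k : ℕ} (p : Fin n → Prop) (e : {q : Fin n // p q} ≃ Fin k) :
    {x : Fin n × Bool // p x.1} ≃ Fin k × Bool :=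
  (subProd p).trans (Equiv.prodCongr e (Equiv.refl Bool))

@[simp] lemma bE_apply {k : ℕ} (p : Fin n → Prop) (e : {q : Fin n // p q} ≃ Fin k)
    (x : {x : Fin n × Bool // p x.1}) : bE p e x = (e ⟨x.1.1, x.2⟩, x.1.2) := rfl

@[simp] lemma bE_symm_apply {k : ℕ} (p : Fin n → Prop) (e : {q : Fin n // p q} ≃ Fin k)
    (y : Fin k × Bool) : (bE p e).symm y = ⟨((e.symm y.1 : Fin n), y.2), (e.symm y.1).2⟩ := rfl

lemma flipP_pres (p : Fin n → Prop) : ∀ x : Fin n × Bool, p ((flipP n x).1) ↔ p x.1 :=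
  fun _ => Iff.rfl

/-- transporting the restricted flip gives the standard flip -/
lemma bE_flip {k : ℕ} (p : Fin n → Prop) (e : {q : Fin n // p q} ≃ Fin k) :
    (bE p e).permCongr ((flipP n).subtypePerm (flipP_pres p)) = flipP k := by
  ext y : 1
  simp [Equiv.permCongr_apply, Equiv.Perm.subtypePerm_apply]


variable {m : ℕ}

lemma hAgree_gen (t : Fin m → Equiv.Perm (Fin n × Bool)) (P : Fin n × Bool → Prop)
    (hflip : ∀ x, P (flipP n x) ↔ P x) (hpres : ∀ i x, P (t i x) ↔ P x) :
    ∀ g ∈ ({flipP n} ∪ Set.range t : Set (Equiv.Perm (Fin n × Bool))),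
      ∃ g' ∈ ({(flipP n).subtypePerm hflip} ∪
          Set.range fun i => (t i).subtypePerm (hpres i) :
            Set (Equiv.Perm {x : Fin n × Bool // P x})),
        ∀ x : {x : Fin n × Bool // P x}, g x.1 = ((g' x : {x // P x}) : Fin n × Bool) := by
  intro g hg
  rcases hg with hg | ⟨i, rfl⟩
  · rw [Set.mem_singleton_iff] at hg
    subst hg
    exact ⟨(flipP n).subtypePerm hflip, Or.inl rfl, fun x => rfl⟩
  · exact ⟨(t i).subtypePerm (hpres i), Or.inr ⟨i, rfl⟩, fun x => rfl⟩

lemma hAgree_gen' (t : Fin m → Equiv.Perm (Fin n × Bool)) (P : Fin n × Bool → Prop)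
    (hflip : ∀ x, P (flipP n x) ↔ P x) (hpres : ∀ i x, P (t i x) ↔ P x) :
    ∀ g' ∈ ({(flipP n).subtypePerm hflip} ∪
        Set.range fun i => (t i).subtypePerm (hpres i) :
          Set (Equiv.Perm {x : Fin n × Bool // P x})),
      ∃ g ∈ ({flipP n} ∪ Set.range t : Set (Equiv.Perm (Fin n × Bool))),
        ∀ x : {x : Fin n × Bool // P x}, g x.1 = ((g' x : {x // P x}) : Fin n × Bool) := by
  intro g' hg'
  rcases hg' with hg' | ⟨i, rfl⟩
  · rw [Set.mem_singleton_iff] at hg'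
    subst hg'
    exact ⟨flipP n, Or.inl rfl, fun x => rfl⟩
  · exact ⟨t i, Or.inr ⟨i, rfl⟩, fun x => rfl⟩

lemma orbit_eq_of_trans (t : Fin m → Equiv.Perm (Fin n × Bool)) (x₀ : Fin n × Bool)
    (P : Fin n × Bool → Prop) (hx₀ : P x₀)
    (hflip : ∀ x, P (flipP n x) ↔ P x) (hpres : ∀ i x, P (t i x) ↔ P x)
    (htrans : GenTransitive ({(flipP n).subtypePerm hflip} ∪
        Set.range fun i => (t i).subtypePerm (hpres i))) :
    MulAction.orbit (Subgroup.closure ({flipP n} ∪ Set.range t)) x₀ = {x | P x} := by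
  ext y
  constructor
  · intro hy
    rw [mem_orbit_closure_iff] at hy
    obtain ⟨g, hg, rfl⟩ := hy
    obtain ⟨g', _, ha⟩ := agree_closure (hAgree_gen t P hflip hpres) hg
    have h2 := ha ⟨x₀, hx₀⟩
    show P (g x₀)
    rw [h2]
    exact (g' ⟨x₀, hx₀⟩).2
  · intro hy
    obtain ⟨gg, hgg, heq⟩ := htrans ⟨x₀, hx₀⟩ ⟨y, hy⟩
    obtain ⟨g, hg, ha⟩ := agree_closure' (hAgree_gen' t P hflip hpres) hgg
    rw [mem_orbit_closure_iff]
    refine ⟨g, hg, ?_⟩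
    rw [ha ⟨x₀, hx₀⟩, heq]

lemma restricted_trans (t : Fin m → Equiv.Perm (Fin n × Bool)) (x₀ : Fin n × Bool)
    (P : Fin n × Bool → Prop)
    (hP : ∀ x, P x ↔ x ∈ MulAction.orbit (Subgroup.closure ({flipP n} ∪ Set.range t)) x₀)
    (hflip : ∀ x, P (flipP n x) ↔ P x) (hpres : ∀ i x, P (t i x) ↔ P x) :
    GenTransitive ({(flipP n).subtypePerm hflip} ∪
      Set.range fun i => (t i).subtypePerm (hpres i)) := by
  intro x y
  have hx := (hP x.1).mp x.2
  have hy := (hP y.1).mp y.2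
  rw [mem_orbit_closure_iff] at hx hy
  obtain ⟨g₁, m1, e1⟩ := hx
  obtain ⟨g₂, m2, e2⟩ := hy
  have hg : g₂ * g₁⁻¹ ∈ Subgroup.closure ({flipP n} ∪ Set.range t) :=
    mul_mem m2 (inv_mem m1)
  have hgx : (g₂ * g₁⁻¹) x.1 = y.1 := by
    rw [Equiv.Perm.mul_apply, ← e1, Equiv.Perm.coe_inv, Equiv.symm_apply_apply, e2]
  obtain ⟨g', hg', ha⟩ := agree_closure (hAgree_gen t P hflip hpres) hg
  refine ⟨g', hg', Subtype.ext ?_⟩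
  rw [← ha x, hgx]

end MainN

section SubtypeCongrStuff

variable {α : Type*} {p : α → Prop} [DecidablePred p]

lemma subtypeCongr_left (ep : Equiv.Perm {x // p x}) (en : Equiv.Perm {x // ¬ p x})
    {x : α} (hx : p x) : ep.subtypeCongr en x = (ep ⟨x, hx⟩ : {x // p x}) := by
  rw [Equiv.Perm.subtypeCongr.apply, dif_pos hx]

lemma subtypeCongr_right (ep : Equiv.Perm {x // p x}) (en : Equiv.Perm {x // ¬ p x})
    {x : α} (hx : ¬ p x) : ep.subtypeCongr en x = (en ⟨x, hx⟩ : {x // ¬ p x}) := by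
  rw [Equiv.Perm.subtypeCongr.apply, dif_neg hx]

lemma subtypeCongr_mem_iff (ep : Equiv.Perm {x // p x}) (en : Equiv.Perm {x // ¬ p x})
    (x : α) : p x ↔ p (ep.subtypeCongr en x) := by
  by_cases hx : p x
  · rw [subtypeCongr_left ep en hx]
    simp [hx, (ep ⟨x, hx⟩).2]
  · rw [subtypeCongr_right ep en hx]
    simp [hx, (en ⟨x, hx⟩).2]

lemma fpf_subtypeCongr {ep : Equiv.Perm {x // p x}} {en : Equiv.Perm {x // ¬ p x}}
    (h1 : IsFpfInv ep) (h2 : IsFpfInv en) : IsFpfInv (ep.subtypeCongr en) := by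
  rw [isFpfInv_iff] at h1 h2 ⊢
  constructor
  · intro x
    by_cases hx : p x
    · rw [subtypeCongr_left ep en hx, subtypeCongr_left ep en (ep ⟨x, hx⟩).2]
      exact congrArg Subtype.val (h1.1 ⟨x, hx⟩)
    · rw [subtypeCongr_right ep en hx, subtypeCongr_right ep en (en ⟨x, hx⟩).2]
      exact congrArg Subtype.val (h2.1 ⟨x, hx⟩)
  · intro x
    by_cases hx : p x
    · rw [subtypeCongr_left ep en hx]
      exact fun h => h1.2 ⟨x, hx⟩ (Subtype.ext h)
    · rw [subtypeCongr_right ep en hx]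
      exact fun h => h2.2 ⟨x, hx⟩ (Subtype.ext h)

lemma subtypePerm_subtypeCongr_left (ep : Equiv.Perm {x // p x})
    (en : Equiv.Perm {x // ¬ p x}) (h : ∀ x, p (ep.subtypeCongr en x) ↔ p x) :
    (ep.subtypeCongr en).subtypePerm h = ep := by
  refine Equiv.ext fun x => Subtype.ext ?_
  rw [Equiv.Perm.subtypePerm_apply]
  exact subtypeCongr_left ep en x.2

lemma subtypePerm_subtypeCongr_right (ep : Equiv.Perm {x // p x})
    (en : Equiv.Perm {x // ¬ p x}) (h : ∀ x, ¬ p (ep.subtypeCongr en x) ↔ ¬ p x) :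
    (ep.subtypeCongr en).subtypePerm h = en := by
  refine Equiv.ext fun x => Subtype.ext ?_
  rw [Equiv.Perm.subtypePerm_apply]
  exact subtypeCongr_right ep en x.2

lemma subtypeCongr_subtypePerm (σ : Equiv.Perm α) (h : ∀ x, p (σ x) ↔ p x)
    (h' : ∀ x, ¬ p (σ x) ↔ ¬ p x) :
    (σ.subtypePerm h).subtypeCongr (σ.subtypePerm h') = σ := by
  refine Equiv.ext fun x => ?_
  by_cases hx : p x
  · rw [subtypeCongr_left _ _ hx]; rfl
  · rw [subtypeCongr_right _ _ hx]; rfl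

end SubtypeCongrStuff

lemma permCongr_cancel {α β : Type*} (e : α ≃ β) (σ : Equiv.Perm β) :
    e.permCongr (e.symm.permCongr σ) = σ := by
  ext x; simp

lemma permCongr_cancel' {α β : Type*} (e : α ≃ β) (σ : Equiv.Perm α) :
    e.symm.permCongr (e.permCongr σ) = σ := by
  ext x; simp


lemma image_gen_set {α β : Type*} {m : ℕ} (e : α ≃ β) (f : Equiv.Perm α)
    (t : Fin m → Equiv.Perm α) :
    (fun σ => e.permCongr σ) '' ({f} ∪ Set.range t)
      = {e.permCongr f} ∪ Set.range (fun i => e.permCongr (t i)) := by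
  rw [Set.image_union, Set.image_singleton, ← Set.range_comp]
  rfl

section Grand

variable {n k m : ℕ}

noncomputable def eIn (s : Finset (Fin n)) (hs : s.card = k) : {q : Fin n // q ∈ s} ≃ Fin k :=
  Fintype.equivFinOfCardEq (by rw [Fintype.card_coe, hs])

noncomputable def eOut (s : Finset (Fin n)) (hs : s.card = k) (hkn : k ≤ n) :
    {q : Fin n // ¬ q ∈ s} ≃ Fin (n - k) :=
  Fintype.equivFinOfCardEq (by
    rw [Fintype.card_subtype_compl, Fintype.card_coe, hs, Fintype.card_fin])

lemma card_subtype_mem (s : Finset (Fin n)) :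
    Nat.card {x : Fin n × Bool // x.1 ∈ s} = 2 * s.card := by
  rw [Nat.card_congr (subProd (· ∈ s)), Nat.card_prod]
  simp [Nat.card_eq_fintype_card, Fintype.card_coe]
  ring

open Classical in
noncomputable def sOf (t : Fin m → Equiv.Perm (Fin n × Bool)) (x₀ : Fin n × Bool) :
    Finset (Fin n) :=
  Finset.univ.filter (fun q => ((q, false) : Fin n × Bool) ∈
    MulAction.orbit (Subgroup.closure ({flipP n} ∪ Set.range t)) x₀)

lemma mem_sOf {t : Fin m → Equiv.Perm (Fin n × Bool)} {x₀ : Fin n × Bool} {q : Fin n} :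
    q ∈ sOf t x₀ ↔ ((q, false) : Fin n × Bool) ∈
      MulAction.orbit (Subgroup.closure ({flipP n} ∪ Set.range t)) x₀ := by
  classical
  simp only [sOf, Finset.mem_filter, Finset.mem_univ, true_and]

lemma flipP_mem_closure (t : Fin m → Equiv.Perm (Fin n × Bool)) :
    flipP n ∈ Subgroup.closure ({flipP n} ∪ Set.range t) :=
  Subgroup.subset_closure (Or.inl rfl)

lemma t_mem_closure (t : Fin m → Equiv.Perm (Fin n × Bool)) (i : Fin m) :
    t i ∈ Subgroup.closure ({flipP n} ∪ Set.range t) :=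
  Subgroup.subset_closure (Or.inr ⟨i, rfl⟩)

lemma sOf_orbit_iff (t : Fin m → Equiv.Perm (Fin n × Bool)) (x₀ : Fin n × Bool)
    (x : Fin n × Bool) :
    x ∈ MulAction.orbit (Subgroup.closure ({flipP n} ∪ Set.range t)) x₀
      ↔ x.1 ∈ sOf t x₀ := by
  obtain ⟨q, b⟩ := x
  cases b
  · rw [mem_sOf]
  · rw [mem_sOf]
    have h := orbit_pres (x₀ := x₀) (flipP_mem_closure t) (q, true)
    simp only [flipP_apply, Bool.not_true] at h
    exact h

lemma sOf_basemem (t : Fin m → Equiv.Perm (Fin n × Bool)) (x₀ : Fin n × Bool) :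
    x₀.1 ∈ sOf t x₀ :=
  (sOf_orbit_iff t x₀ x₀).mp (MulAction.mem_orbit_self x₀)

lemma sOf_pres (t : Fin m → Equiv.Perm (Fin n × Bool)) (x₀ : Fin n × Bool) (i : Fin m) :
    ∀ x : Fin n × Bool, ((t i x).1 ∈ sOf t x₀) ↔ (x.1 ∈ sOf t x₀) := by
  intro x
  rw [← sOf_orbit_iff, ← sOf_orbit_iff]
  exact (orbit_pres (t_mem_closure t i) x).symm

lemma orbit_eq_sOf (t : Fin m → Equiv.Perm (Fin n × Bool)) (x₀ : Fin n × Bool) :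
    MulAction.orbit (Subgroup.closure ({flipP n} ∪ Set.range t)) x₀
      = {x : Fin n × Bool | x.1 ∈ sOf t x₀} :=
  Set.ext fun x => sOf_orbit_iff t x₀ x

lemma sOf_card (t : Fin m → Equiv.Perm (Fin n × Bool)) (x₀ : Fin n × Bool)
    (ht2 : Nat.card (MulAction.orbit (Subgroup.closure ({flipP n} ∪ Set.range t)) x₀)
      = 2 * k) : (sOf t x₀).card = k := by
  rw [orbit_eq_sOf] at ht2
  have h2 : Nat.card {x : Fin n × Bool | x.1 ∈ sOf t x₀} = 2 * (sOf t x₀).card :=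
    card_subtype_mem (sOf t x₀)
  rw [h2] at ht2
  omega

lemma sOf_trans (t : Fin m → Equiv.Perm (Fin n × Bool)) (x₀ : Fin n × Bool) :
    GenTransitive ({(flipP n).subtypePerm (flipP_pres (· ∈ sOf t x₀))} ∪
      Set.range fun i => (t i).subtypePerm (p := fun x => x.1 ∈ sOf t x₀) (sOf_pres t x₀ i)) :=
  restricted_trans t x₀ _ (fun x => (sOf_orbit_iff t x₀ x).symm) _ _

noncomputable def buildT (s : Finset (Fin n)) (hs : s.card = k) (hkn : k ≤ n)
    (v : Fin m → Equiv.Perm (Fin k × Bool)) (u : Fin m → Equiv.Perm (Fin (n - k) × Bool)) :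
    Fin m → Equiv.Perm (Fin n × Bool) :=
  fun i => Equiv.Perm.subtypeCongr
    ((bE (· ∈ s) (eIn s hs)).symm.permCongr (v i))
    ((bE (fun q => ¬ q ∈ s) (eOut s hs hkn)).symm.permCongr (u i))

lemma buildT_pres (s : Finset (Fin n)) (hs : s.card = k) (hkn : k ≤ n)
    (v : Fin m → Equiv.Perm (Fin k × Bool)) (u : Fin m → Equiv.Perm (Fin (n - k) × Bool))
    (i : Fin m) :
    ∀ x : Fin n × Bool, ((buildT s hs hkn v u i x).1 ∈ s) ↔ (x.1 ∈ s) :=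
  fun x => (subtypeCongr_mem_iff ((bE (· ∈ s) (eIn s hs)).symm.permCongr (v i))
    ((bE (fun q => ¬ q ∈ s) (eOut s hs hkn)).symm.permCongr (u i)) x).symm

lemma buildT_res_left (s : Finset (Fin n)) (hs : s.card = k) (hkn : k ≤ n)
    (v : Fin m → Equiv.Perm (Fin k × Bool)) (u : Fin m → Equiv.Perm (Fin (n - k) × Bool))
    (i : Fin m) (h : ∀ x : Fin n × Bool, ((buildT s hs hkn v u i x).1 ∈ s) ↔ (x.1 ∈ s)) :
    (buildT s hs hkn v u i).subtypePerm h
      = (bE (· ∈ s) (eIn s hs)).symm.permCongr (v i) :=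
  subtypePerm_subtypeCongr_left ((bE (· ∈ s) (eIn s hs)).symm.permCongr (v i))
    ((bE (fun q => ¬ q ∈ s) (eOut s hs hkn)).symm.permCongr (u i)) h

lemma buildT_res_right (s : Finset (Fin n)) (hs : s.card = k) (hkn : k ≤ n)
    (v : Fin m → Equiv.Perm (Fin k × Bool)) (u : Fin m → Equiv.Perm (Fin (n - k) × Bool))
    (i : Fin m) (h : ∀ x : Fin n × Bool, (¬ (buildT s hs hkn v u i x).1 ∈ s) ↔ (¬ x.1 ∈ s)) :
    (buildT s hs hkn v u i).subtypePerm h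
      = (bE (fun q => ¬ q ∈ s) (eOut s hs hkn)).symm.permCongr (u i) :=
  subtypePerm_subtypeCongr_right ((bE (· ∈ s) (eIn s hs)).symm.permCongr (v i))
    ((bE (fun q => ¬ q ∈ s) (eOut s hs hkn)).symm.permCongr (u i)) h

lemma flipRes_eq (s : Finset (Fin n)) (hs : s.card = k) :
    (flipP n).subtypePerm (flipP_pres (· ∈ s))
      = (bE (· ∈ s) (eIn s hs)).symm.permCongr (flipP k) := by
  rw [← bE_flip (· ∈ s) (eIn s hs), permCongr_cancel']

lemma buildT_fpf (s : Finset (Fin n)) (hs : s.card = k) (hkn : k ≤ n)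
    {v : Fin m → Equiv.Perm (Fin k × Bool)} {u : Fin m → Equiv.Perm (Fin (n - k) × Bool)}
    (hv : ∀ i, IsFpfInv (v i)) (hu : ∀ i, IsFpfInv (u i)) (i : Fin m) :
    IsFpfInv (buildT s hs hkn v u i) :=
  fpf_subtypeCongr (IsFpfInv.congr _ (hv i)) (IsFpfInv.congr _ (hu i))

lemma buildT_orbit (s : Finset (Fin n)) (hs : s.card = k) (hkn : k ≤ n)
    {v : Fin m → Equiv.Perm (Fin k × Bool)} (u : Fin m → Equiv.Perm (Fin (n - k) × Bool))
    (hv2 : GenTransitive ({flipP k} ∪ Set.range v)) (x₀ : Fin n × Bool) (hx₀ : x₀.1 ∈ s) :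
    MulAction.orbit (Subgroup.closure
        ({flipP n} ∪ Set.range (buildT s hs hkn v u))) x₀
      = {x : Fin n × Bool | x.1 ∈ s} := by
  refine orbit_eq_of_trans _ x₀ (fun x => x.1 ∈ s) hx₀ (flipP_pres (· ∈ s))
    (buildT_pres s hs hkn v u) ?_
  have h2 := genTransitive_image (bE (· ∈ s) (eIn s hs)).symm hv2
  rw [image_gen_set] at h2
  have e3 : (fun i => (buildT s hs hkn v u i).subtypePerm (buildT_pres s hs hkn v u i))
      = fun i => (bE (· ∈ s) (eIn s hs)).symm.permCongr (v i) :=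
    funext fun i => buildT_res_left s hs hkn v u i _
  rw [e3, flipRes_eq s hs]
  exact h2

lemma buildT_card (s : Finset (Fin n)) (hs : s.card = k) (hkn : k ≤ n)
    {v : Fin m → Equiv.Perm (Fin k × Bool)} (u : Fin m → Equiv.Perm (Fin (n - k) × Bool))
    (hv2 : GenTransitive ({flipP k} ∪ Set.range v)) (x₀ : Fin n × Bool) (hx₀ : x₀.1 ∈ s) :
    Nat.card (MulAction.orbit (Subgroup.closure
        ({flipP n} ∪ Set.range (buildT s hs hkn v u))) x₀) = 2 * k := by
  rw [buildT_orbit s hs hkn u hv2 x₀ hx₀]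
  have h2 : Nat.card {x : Fin n × Bool | x.1 ∈ s} = 2 * s.card := card_subtype_mem s
  rw [h2, hs]

noncomputable def grandEquiv (x₀ : Fin n × Bool) (hkn : k ≤ n) :
    {t : Fin m → Equiv.Perm (Fin n × Bool) //
      (∀ i, IsFpfInv (t i)) ∧
        Nat.card (MulAction.orbit (Subgroup.closure ({flipP n} ∪ Set.range t)) x₀)
          = 2 * k}
    ≃ ({s : Finset (Fin n) // x₀.1 ∈ s ∧ s.card = k} ×
        {v : Fin m → Equiv.Perm (Fin k × Bool) //
          (∀ i, IsFpfInv (v i)) ∧ GenTransitive ({flipP k} ∪ Set.range v)} ×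
        (Fin m → {σ : Equiv.Perm (Fin (n - k) × Bool) // IsFpfInv σ})) where
  toFun tp :=
    ⟨⟨sOf tp.1 x₀, sOf_basemem tp.1 x₀, sOf_card tp.1 x₀ tp.2.2⟩,
     ⟨fun i => (bE (· ∈ sOf tp.1 x₀) (eIn _ (sOf_card tp.1 x₀ tp.2.2))).permCongr
         ((tp.1 i).subtypePerm (sOf_pres tp.1 x₀ i)),
      fun i => IsFpfInv.congr _ (fpf_subtypePerm (tp.2.1 i) _),
      by
        have h2 := genTransitive_image (bE (· ∈ sOf tp.1 x₀)
          (eIn _ (sOf_card tp.1 x₀ tp.2.2))) (sOf_trans tp.1 x₀)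
        rw [image_gen_set, bE_flip] at h2
        exact h2⟩,
     fun i => ⟨(bE (fun q => ¬ q ∈ sOf tp.1 x₀)
         (eOut _ (sOf_card tp.1 x₀ tp.2.2) hkn)).permCongr
         ((tp.1 i).subtypePerm fun x => not_congr (sOf_pres tp.1 x₀ i x)),
       IsFpfInv.congr _ (fpf_subtypePerm (tp.2.1 i) _)⟩⟩
  invFun p :=
    ⟨buildT p.1.1 p.1.2.2 hkn p.2.1.1 (fun i => (p.2.2 i).1),
     fun i => buildT_fpf p.1.1 p.1.2.2 hkn p.2.1.2.1 (fun i => (p.2.2 i).2) i,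
     buildT_card p.1.1 p.1.2.2 hkn _ p.2.1.2.2 x₀ p.1.2.1⟩
  left_inv := by
    rintro ⟨t, ht1, ht2⟩
    refine Subtype.ext (funext fun i => ?_)
    show Equiv.Perm.subtypeCongr _ _ = t i
    rw [permCongr_cancel', permCongr_cancel']
    exact subtypeCongr_subtypePerm (t i) _ _
  right_inv := by
    rintro ⟨⟨s, hz, hs⟩, ⟨v, hv1, hv2⟩, u⟩
    set t := buildT s hs hkn v (fun i => (u i).1) with hT
    have hOrb := buildT_orbit s hs hkn (fun i => (u i).1) hv2 x₀ hz
    rw [← hT] at hOrb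
    have hss : sOf t x₀ = s := by
      refine Finset.ext fun q => ?_
      rw [mem_sOf, hOrb]
      exact Iff.rfl
    have key2 : ∀ (s' : Finset (Fin n)) (hs'' : s' = s) (h1 : s'.card = k) (i : Fin m)
        (hp : ∀ x : Fin n × Bool, ((t i x).1 ∈ s') ↔ (x.1 ∈ s')),
        (bE (· ∈ s') (eIn s' h1)).permCongr ((t i).subtypePerm hp) = v i := by
      rintro s' rfl h1 i hp
      rw [show (t i).subtypePerm hp
          = (bE (· ∈ s') (eIn s' h1)).symm.permCongr (v i) from
        buildT_res_left s' h1 hkn v (fun i => (u i).1) i hp]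
      exact permCongr_cancel _ _
    have key3 : ∀ (s' : Finset (Fin n)) (hs'' : s' = s) (h1 : s'.card = k) (i : Fin m)
        (hp : ∀ x : Fin n × Bool, (¬ (t i x).1 ∈ s') ↔ (¬ x.1 ∈ s')),
        (bE (fun q => ¬ q ∈ s') (eOut s' h1 hkn)).permCongr ((t i).subtypePerm hp)
          = (u i).1 := by
      rintro s' rfl h1 i hp
      rw [show (t i).subtypePerm hp
          = (bE (fun q => ¬ q ∈ s') (eOut s' h1 hkn)).symm.permCongr ((u i).1) from
        buildT_res_right s' h1 hkn v (fun i => (u i).1) i hp]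
      exact permCongr_cancel _ _
    refine Prod.ext (Subtype.ext hss) (Prod.ext ?_ ?_)
    · exact Subtype.ext (funext fun i => key2 _ hss _ i _)
    · exact funext fun i => Subtype.ext (key3 _ hss _ i _)

end Grand

/-! ### Section 4: transport to `Fin (2*n)` and final counting -/

def eFin (n : ℕ) : (Fin n × Bool) ≃ Fin (2 * n) where
  toFun x := ⟨2 * (x.1 : ℕ) + (if x.2 then 1 else 0), by
    rcases x with ⟨⟨v, hv⟩, b⟩
    cases b <;> simp <;> omega⟩
  invFun i := (⟨(i : ℕ) / 2, by omega⟩, decide ((i : ℕ) % 2 = 1))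
  left_inv := by
    rintro ⟨⟨v, hv⟩, b⟩
    cases b
    · have h1 : (2 * v + 0) % 2 = 0 := by omega
      have h2 : (2 * v + 0) / 2 = v := by omega
      refine Prod.ext (Fin.ext ?_) ?_ <;> simp [h1, h2]
    · have h1 : (2 * v + 1) % 2 = 1 := by omega
      have h2 : (2 * v + 1) / 2 = v := by omega
      refine Prod.ext (Fin.ext ?_) ?_ <;> simp [h1, h2]
  right_inv := by
    intro i
    apply Fin.ext
    rcases Nat.mod_two_eq_zero_or_one (i : ℕ) with h | h <;> simp [h] <;> omega

lemma eFin_flip (n : ℕ) : (eFin n).permCongr (flipP n) = stdInv n := by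
  refine Equiv.ext fun i => Fin.ext ?_
  rcases Nat.mod_two_eq_zero_or_one (i : ℕ) with h | h <;>
    simp [stdInv, eFin, Function.Involutive.toPerm, Equiv.permCongr_apply, h] <;>
    omega

lemma card_A_transport (n k m : ℕ) (hn : 0 < n) (h2n : 0 < 2 * n) :
    Nat.card {t : Fin m → Equiv.Perm (Fin (2 * n)) //
      (∀ i, IsFpfInv (t i)) ∧
        Nat.card (MulAction.orbit (Subgroup.closure ({stdInv n} ∪ Set.range t))
          (⟨0, h2n⟩ : Fin (2 * n))) = 2 * k}
    = Nat.card {t : Fin m → Equiv.Perm (Fin n × Bool) //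
      (∀ i, IsFpfInv (t i)) ∧
        Nat.card (MulAction.orbit (Subgroup.closure ({flipP n} ∪ Set.range t))
          ((⟨0, hn⟩ : Fin n), false)) = 2 * k} := by
  refine (Nat.card_congr (Equiv.subtypeEquiv
    (Equiv.piCongrRight fun _ : Fin m => (eFin n).permCongr) fun t => ?_)).symm
  have hbase : (⟨0, h2n⟩ : Fin (2 * n)) = eFin n ((⟨0, hn⟩ : Fin n), false) := by
    apply Fin.ext
    simp [eFin]
  have hset : ({stdInv n} ∪ Set.range fun i => (eFin n).permCongr (t i) :
      Set (Equiv.Perm (Fin (2 * n))))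
      = (fun σ => (eFin n).permCongr σ) '' ({flipP n} ∪ Set.range t) := by
    rw [image_gen_set, eFin_flip]
  have hcard : Nat.card (MulAction.orbit (Subgroup.closure
        ({stdInv n} ∪ Set.range fun i => (eFin n).permCongr (t i)))
        (⟨0, h2n⟩ : Fin (2 * n)))
      = Nat.card (MulAction.orbit (Subgroup.closure ({flipP n} ∪ Set.range t))
        ((⟨0, hn⟩ : Fin n), false)) := by
    rw [hset, hbase]
    exact card_orbit_image (eFin n) _ _
  constructor
  · rintro ⟨h1, h2⟩
    refine ⟨fun i => IsFpfInv.congr _ (h1 i), ?_⟩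
    show Nat.card (MulAction.orbit (Subgroup.closure
      ({stdInv n} ∪ Set.range fun i => (eFin n).permCongr (t i))) _) = 2 * k
    refine hcard.trans ?_
    exact h2
  · rintro ⟨h1, h2⟩
    refine ⟨fun i => (isFpfInv_congr_iff (eFin n) (t i)).mp (h1 i), ?_⟩
    rw [← hcard]
    exact h2

lemma card_VT (k m : ℕ) :
    Nat.card {v : Fin m → Equiv.Perm (Fin k × Bool) //
      (∀ i, IsFpfInv (v i)) ∧ GenTransitive ({flipP k} ∪ Set.range v)}
    = Nat.card {t : Fin m → Equiv.Perm (Fin (2 * k)) //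
      (∀ i, IsFpfInv (t i)) ∧ GenTransitive ({stdInv k} ∪ Set.range t)} := by
  refine Nat.card_congr (Equiv.subtypeEquiv
    (Equiv.piCongrRight fun _ : Fin m => (eFin k).permCongr) fun v => ?_)
  have hset : ({stdInv k} ∪ Set.range fun i => (eFin k).permCongr (v i) :
      Set (Equiv.Perm (Fin (2 * k))))
      = (fun σ => (eFin k).permCongr σ) '' ({flipP k} ∪ Set.range v) := by
    rw [image_gen_set, eFin_flip]
  constructor
  · rintro ⟨h1, h2⟩
    refine ⟨fun i => IsFpfInv.congr _ (h1 i), ?_⟩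
    show GenTransitive ({stdInv k} ∪ Set.range fun i => (eFin k).permCongr (v i))
    rw [hset]
    exact genTransitive_image _ h2
  · rintro ⟨h1, h2⟩
    refine ⟨fun i => (isFpfInv_congr_iff (eFin k) (v i)).mp (h1 i), ?_⟩
    have h3 : GenTransitive ((fun σ => (eFin k).permCongr σ) '' ({flipP k} ∪ Set.range v)) := by
      rw [← hset]
      exact h2
    exact (genTransitive_image_iff _ _).mp h3

lemma card_fpf_prod (r : ℕ) :
    Nat.card {σ : Equiv.Perm (Fin r × Bool) // IsFpfInv σ} = oddDF r := by
  rw [card_fpf_congr (eFin r)]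
  exact card_fpf r (Fin (2 * r)) (Fintype.card_fin _)

lemma card_UT (r m : ℕ) :
    Nat.card (Fin m → {σ : Equiv.Perm (Fin r × Bool) // IsFpfInv σ}) = oddDF r ^ m := by
  rw [Nat.card_fun, card_fpf_prod, Nat.card_eq_fintype_card, Fintype.card_fin]

lemma card_Idx (n k : ℕ) (z : Fin n) (hk1 : 1 ≤ k) :
    Nat.card {s : Finset (Fin n) // z ∈ s ∧ s.card = k} = (n - 1).choose (k - 1) := by
  classical
  have e : {s : Finset (Fin n) // z ∈ s ∧ s.card = k}
      ≃ {s : Finset {q : Fin n // q ≠ z} // s.card = k - 1} := by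
    refine
      { toFun := fun s => ⟨(s.1.erase z).subtype (· ≠ z), ?_⟩
        invFun := fun s => ⟨insert z (s.1.map (Function.Embedding.subtype _)), ?_, ?_⟩
        left_inv := ?_
        right_inv := ?_ }
    · rw [Finset.card_subtype, Finset.filter_true_of_mem (fun q hq => (Finset.mem_erase.mp hq).1),
        Finset.card_erase_of_mem s.2.1, s.2.2]
    · exact Finset.mem_insert_self z _
    · rw [Finset.card_insert_of_notMem (by simp), Finset.card_map, s.2]
      omega
    · rintro ⟨s, hz, hs⟩
      refine Subtype.ext (Finset.ext fun q => ?_)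
      simp only [Finset.mem_insert, Finset.mem_map, Finset.mem_subtype, Finset.mem_erase,
        Function.Embedding.coe_subtype]
      constructor
      · rintro (rfl | ⟨⟨r, hr⟩, ⟨hr1, hr2⟩, rfl⟩)
        · exact hz
        · exact hr2
      · intro hq
        by_cases hqz : q = z
        · exact Or.inl hqz
        · exact Or.inr ⟨⟨q, hqz⟩, ⟨hqz, hq⟩, rfl⟩
    · rintro ⟨s, hs⟩
      refine Subtype.ext (Finset.ext fun q => ?_)
      obtain ⟨q, hq⟩ := q
      simp only [Finset.mem_subtype, Finset.mem_erase, Finset.mem_insert, Finset.mem_map,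
        Function.Embedding.coe_subtype]
      constructor
      · rintro ⟨h1, rfl | ⟨⟨r, hr⟩, hr1, hr2⟩⟩
        · exact absurd rfl h1
        · have hrq : r = q := hr2
          subst hrq
          exact hr1
      · intro h
        exact ⟨hq, Or.inr ⟨⟨q, hq⟩, h, rfl⟩⟩
  rw [Nat.card_congr e, Nat.card_eq_fintype_card, Fintype.card_finset_len]
  congr 1
  rw [Fintype.card_subtype_compl, Fintype.card_subtype_eq, Fintype.card_fin]

end Stmt9Aux

/-- `vCount d k` is the number of `(d-1)`-tuples `(t₂,…,t_d)` of fixed-point-free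
involutions on a set of size `2k` which, together with the standard fixed-point-free
involution, generate a transitive group. -/
noncomputable def vCount (d k : ℕ) : ℕ :=
  Nat.card {t : Fin (d - 1) → Equiv.Perm (Fin (2 * k)) //
    (∀ i, IsFpfInv (t i)) ∧ GenTransitive ({stdInv k} ∪ Set.range t)}

theorem stmt9 (d : ℕ) (hd : 2 ≤ d) (n : ℕ) (hn : 2 ≤ n) (k : ℕ) (hk1 : 1 ≤ k)
    (hkn : k ≤ n) :
    Nat.card {t : Fin (d - 1) → Equiv.Perm (Fin (2 * n)) //
        (∀ i, IsFpfInv (t i)) ∧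
          Nat.card (MulAction.orbit
              (Subgroup.closure ({stdInv n} ∪ Set.range t))
              (⟨0, by omega⟩ : Fin (2 * n))) = 2 * k} =
      (n - 1).choose (k - 1) * oddDF (n - k) ^ (d - 1) * vCount d k := by
  have hn0 : 0 < n := by omega
  have h2n : 0 < 2 * n := by omega
  refine Eq.trans (Stmt9Aux.card_A_transport n k (d - 1) hn0 h2n) ?_
  refine Eq.trans (Nat.card_congr
    (Stmt9Aux.grandEquiv (((⟨0, hn0⟩ : Fin n), false)) hkn)) ?_
  rw [Nat.card_prod, Nat.card_prod, Stmt9Aux.card_Idx n k _ hk1,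
    Stmt9Aux.card_VT k (d - 1), Stmt9Aux.card_UT (n - k) (d - 1)]
  unfold vCount
  ring
end

section
/- Fix d ≥ 3. With u_n(d) and w_n(d) as in the recurrences above, set x_n(d) = w_n(d) − u_n(d). Then x_n(d) ≤ 2^{-n}·((2n-1)!!)^{d-1}·(n!)^{d-1} for all n ≥ 1. -/
open Nat

lemma oddDF_zero : oddDF 0 = 1 := rfl
lemma two_mul_factorial (n : ℕ) : (2 * n)! = 2 ^ n * n ! * oddDF n := by
  induction n with
  | zero => simp [oddDF]
  | succ n ih =>
    have h : 2 * (n + 1) = (2 * n + 1) + 1 := by ring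
    rw [h, Nat.factorial_succ, Nat.factorial_succ, ih, oddDF_succ, Nat.factorial_succ]
    ring

lemma le_choose : ∀ n k : ℕ, 1 ≤ k → k < n → n ≤ n.choose k := by
  intro n
  induction n with
  | zero => intro k h1 h2; omega
  | succ n ih =>
    intro k h1 h2
    rcases Nat.eq_or_lt_of_le h1 with h | hk2
    · rw [← h, Nat.choose_one_right]
    rcases Nat.eq_or_lt_of_le (Nat.lt_succ_iff.mp h2) with rfl | hkn
    · rw [Nat.choose_succ_self_right]
    obtain ⟨j, rfl⟩ : ∃ j, k = j + 1 := ⟨k - 1, by omega⟩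
    rw [Nat.choose_succ_succ]
    have h1' := ih j (by omega) (by omega)
    have h2' := ih (j + 1) (by omega) hkn
    simp only [Nat.succ_eq_add_one] at *
    omega

lemma choose_sq_le (n k : ℕ) (h1 : 1 ≤ k) (h2 : k < n) :
    (2 * n - 1) * n.choose k ^ 2 ≤ n * (2 * n).choose (2 * k) := by
  obtain ⟨j, rfl⟩ : ∃ j, k = j + 1 := ⟨k - 1, by omega⟩
  obtain ⟨b, rfl⟩ : ∃ b, n = j + b + 2 := ⟨n - j - 2, by omega⟩
  set n := j + b + 2 with hn
  -- Vandermonde lower bound by three central terms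
  have hv : (2 * n).choose (2 * (j+1)) =
      ∑ ij ∈ Finset.HasAntidiagonal.antidiagonal (2 * (j+1)), n.choose ij.1 * n.choose ij.2 := by
    rw [two_mul n]; exact Nat.add_choose_eq n n (2 * (j+1))
  set s : Finset (ℕ × ℕ) := {(j, j+2), (j+1, j+1), (j+2, j)} with hs
  have hsub : s ⊆ Finset.HasAntidiagonal.antidiagonal (2 * (j+1)) := by
    intro p hp
    simp only [hs, Finset.mem_insert, Finset.mem_singleton] at hp
    rcases hp with rfl | rfl | rfl <;> simp [Finset.mem_antidiagonal] <;> omega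
  have hle : ∑ ij ∈ s, n.choose ij.1 * n.choose ij.2 ≤ (2*n).choose (2*(j+1)) := by
    rw [hv]
    exact Finset.sum_le_sum_of_subset hsub
  have hsum : ∑ ij ∈ s, n.choose ij.1 * n.choose ij.2
      = n.choose j * n.choose (j+2) + n.choose (j+1) * n.choose (j+1)
        + n.choose (j+2) * n.choose j := by
    rw [hs, Finset.sum_insert (by simp), Finset.sum_insert (by simp),
      Finset.sum_singleton]
    simp only []
    ring
  set A := n.choose j
  set B := n.choose (j+1)
  set C := n.choose (j+2)
  have e1 : B * (j+1) = A * (b+2) := by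
    have h := Nat.choose_succ_right_eq n j
    have hnj : n - j = b + 2 := by omega
    rw [hnj] at h
    exact h
  have e2 : C * (j+2) = B * (b+1) := by
    have h := Nat.choose_succ_right_eq n (j+1)
    have hnj : n - (j+1) = b + 1 := by omega
    rw [hnj] at h
    exact h
  have e3 : A * C * ((b+2)*(j+2)) = B * B * ((j+1)*(b+1)) := by
    calc A * C * ((b+2)*(j+2)) = (A*(b+2)) * (C*(j+2)) := by ring
      _ = (B*(j+1)) * (B*(b+1)) := by rw [← e1, e2]
      _ = B * B * ((j+1)*(b+1)) := by ring
  have harith : (j+b+1)*((b+2)*(j+2)) ≤ 2*(j+b+2)*((j+1)*(b+1)) := by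
    have h : 2*(j+b+2)*((j+1)*(b+1)) = (j+b+1)*((b+2)*(j+2)) + j*b*(j+b+3) := by ring
    omega
  have key : (j+b+1)*(B*B) ≤ 2*(j+b+2)*(A*C) := by
    have hpos : 0 < (b+2)*(j+2) := by positivity
    apply Nat.le_of_mul_le_mul_right _ hpos
    calc (j+b+1)*(B*B)*((b+2)*(j+2)) = (B*B)*((j+b+1)*((b+2)*(j+2))) := by ring
      _ ≤ (B*B)*(2*(j+b+2)*((j+1)*(b+1))) := Nat.mul_le_mul_left _ harith
      _ = 2*(j+b+2)*(B*B*((j+1)*(b+1))) := by ring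
      _ = 2*(j+b+2)*(A*C*((b+2)*(j+2))) := by rw [e3]
      _ = 2*(j+b+2)*(A*C)*((b+2)*(j+2)) := by ring
  have hX : n.choose j * n.choose (j+2) + n.choose (j+1) * n.choose (j+1)
        + n.choose (j+2) * n.choose j ≤ (2*n).choose (2*(j+1)) := hsum ▸ hle
  have hfin : (2*n-1) * B^2 = (j+b+1)*(B*B) + (j+b+2)*(B*B) := by
    have : 2*n - 1 = (j+b+1) + (j+b+2) := by omega
    rw [this]; ring
  calc (2*n-1) * B^2 = (j+b+1)*(B*B) + (j+b+2)*(B*B) := hfin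
    _ ≤ 2*(j+b+2)*(A*C) + (j+b+2)*(B*B) := by omega
    _ = (j+b+2) * (A*C + B*B + C*A) := by ring
    _ ≤ (j+b+2) * ((2*n).choose (2*(j+1))) := Nat.mul_le_mul_left _ hX
    _ = n * (2*n).choose (2*(j+1)) := by rw [hn]

lemma oddDF_mul_choose (n k : ℕ) (hk : k ≤ n) :
    oddDF k * oddDF (n - k) * (2 * n).choose (2 * k) = oddDF n * n.choose k := by
  obtain ⟨m, rfl⟩ := Nat.exists_eq_add_of_le hk
  have hm : k + m - k = m := by omega
  rw [hm]
  have h1 := two_mul_factorial (k + m)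
  have h2 := two_mul_factorial k
  have h3 := two_mul_factorial m
  have f1 : (2*(k+m)).choose (2*k) * (2*k)! * (2*m)! = (2*(k+m))! := by
    have := Nat.choose_mul_factorial_mul_factorial (by omega : 2*k ≤ 2*(k+m))
    have e : 2*(k+m) - 2*k = 2*m := by omega
    rwa [e] at this
  have f2 : (k+m).choose k * k ! * m ! = (k+m)! := by
    have := Nat.choose_mul_factorial_mul_factorial (by omega : k ≤ k+m)
    have e : k + m - k = m := by omega
    rwa [e] at this
  have hc : 0 < 2 ^ (k+m) * k ! * m ! := by positivity
  apply Nat.eq_of_mul_eq_mul_left hc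
  calc 2 ^ (k+m) * k ! * m ! * (oddDF k * oddDF m * (2*(k+m)).choose (2*k))
      = (2^k * k ! * oddDF k) * (2^m * m ! * oddDF m) * (2*(k+m)).choose (2*k) := by
        rw [pow_add]; ring
    _ = (2*k)! * (2*m)! * (2*(k+m)).choose (2*k) := by rw [← h2, ← h3]
    _ = (2*(k+m))! := by rw [← f1]; ring
    _ = 2^(k+m) * (k+m)! * oddDF (k+m) := h1
    _ = 2^(k+m) * ((k+m).choose k * k ! * m !) * oddDF (k+m) := by rw [f2]
    _ = 2 ^ (k+m) * k ! * m ! * (oddDF (k+m) * (k+m).choose k) := by ring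

lemma key_nat (n k : ℕ) (h1 : 1 ≤ k) (h2 : k < n) :
    (2 * n - 1) * (n.choose k * (oddDF k * oddDF (n - k))) ≤ n * oddDF n := by
  have h3 := choose_sq_le n k h1 h2
  have h4 := oddDF_mul_choose n k h2.le
  have hpos : 0 < n.choose k := Nat.choose_pos h2.le
  apply Nat.le_of_mul_le_mul_right _ hpos
  calc (2*n-1) * (n.choose k * (oddDF k * oddDF (n-k))) * n.choose k
      = ((2*n-1) * (n.choose k)^2) * (oddDF k * oddDF (n-k)) := by ring
    _ ≤ (n * (2*n).choose (2*k)) * (oddDF k * oddDF (n-k)) := Nat.mul_le_mul_right _ h3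
    _ = n * (oddDF k * oddDF (n-k) * (2*n).choose (2*k)) := by ring
    _ = n * (oddDF n * n.choose k) := by rw [h4]
    _ = n * oddDF n * n.choose k := by ring

noncomputable def Bnd (d n : ℕ) : ℝ :=
  ((2:ℝ)^n)⁻¹ * (oddDF n : ℝ)^(d-1) * (n ! : ℝ)^(d-1)

lemma Bnd_pos (d n : ℕ) : 0 < Bnd d n := by
  unfold Bnd
  have h1 : (0:ℝ) < (oddDF n : ℝ) := by exact_mod_cast oddDF_pos n
  have h2 : (0:ℝ) < (n ! : ℝ) := by exact_mod_cast Nat.factorial_pos n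
  positivity

lemma Bnd_one (d : ℕ) : Bnd d 1 = 1/2 := by
  unfold Bnd
  have h : oddDF 1 = 1 := by rw [show (1:ℕ) = 0 + 1 from rfl, oddDF_succ, oddDF_zero]
  rw [h, Nat.factorial_one]
  norm_num

lemma key_real (d n k : ℕ) (hd : 3 ≤ d) (h1 : 1 ≤ k) (h2 : k < n) :
    ((n-1).choose (k-1) : ℝ) * ((oddDF k : ℝ) * (oddDF (n-k) : ℝ)) ^ (d-1) * (2*(n:ℝ) - 1)^2
      ≤ (k : ℝ) * (oddDF n : ℝ) ^ (d-1) := by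
  set C : ℝ := (n.choose k : ℝ) with hCdef
  set ρ : ℝ := (oddDF k : ℝ) * (oddDF (n-k) : ℝ) with hρdef
  set P : ℝ := (oddDF n : ℝ) with hPdef
  set m : ℝ := 2*(n:ℝ) - 1 with hmdef
  have hn2 : 2 ≤ n := by omega
  have hn0 : (0:ℝ) < n := by exact_mod_cast (by omega : 0 < n)
  have hρ0 : 0 ≤ ρ := by positivity
  have hP0 : (0:ℝ) < P := by rw [hPdef]; exact_mod_cast oddDF_pos n
  have hm0 : (0:ℝ) < m := by
    have : (2:ℝ) ≤ (n:ℝ) := by exact_mod_cast hn2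
    rw [hmdef]; linarith
  have hC : (n:ℝ) ≤ C := by rw [hCdef]; exact_mod_cast le_choose n k h1 h2
  have hC0 : (0:ℝ) < C := lt_of_lt_of_le hn0 hC
  -- cast of key_nat
  have h5 : m * (C * ρ) ≤ (n:ℝ) * P := by
    have h := key_nat n k h1 h2
    have hcast : ((2*n-1 : ℕ) : ℝ) = m := by
      rw [hmdef, Nat.cast_sub (by omega : 1 ≤ 2*n)]
      norm_num
    calc m * (C * ρ) = ((2*n-1 : ℕ) : ℝ) * ((n.choose k : ℕ) * ((oddDF k : ℕ) * (oddDF (n-k) : ℕ))) := by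
          rw [hcast]
      _ ≤ ((n : ℕ) : ℝ) * ((oddDF n : ℕ) : ℝ) := by exact_mod_cast h
      _ = (n:ℝ) * P := rfl
  have hρP : ρ ≤ P := by
    have hnm : (n:ℝ) ≤ m := by
      have : (2:ℝ) ≤ (n:ℝ) := by exact_mod_cast hn2
      rw [hmdef]; linarith
    have h6 : (n:ℝ) * ρ ≤ m * (C * ρ) := by
      have h7 : (n:ℝ) * 1 ≤ m * C := by
        calc (n:ℝ) * 1 = (n:ℝ) := by ring
          _ ≤ m := hnm
          _ = m * 1 := by ring
          _ ≤ m * C := by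
            apply mul_le_mul_of_nonneg_left _ hm0.le
            linarith
      calc (n:ℝ) * ρ = ((n:ℝ) * 1) * ρ := by ring
        _ ≤ (m * C) * ρ := mul_le_mul_of_nonneg_right h7 hρ0
        _ = m * (C * ρ) := by ring
    have := le_trans h6 h5
    exact le_of_mul_le_mul_left (by linarith [this]) hn0
  have hsq : (m*(C*ρ))^2 ≤ ((n:ℝ)*P)^2 := pow_le_pow_left₀ (by positivity) h5 2
  have key2 : C * (ρ^2 * m^2) ≤ (n:ℝ) * P^2 := by
    rw [← mul_le_mul_iff_right₀ hn0]
    calc (n:ℝ) * (C * (ρ^2 * m^2)) ≤ C * (C * (ρ^2 * m^2)) := by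
          apply mul_le_mul_of_nonneg_right hC (by positivity)
      _ = (m*(C*ρ))^2 := by ring
      _ ≤ ((n:ℝ)*P)^2 := hsq
      _ = (n:ℝ) * ((n:ℝ)*P^2) := by ring
  have key3 : C * ρ^(d-1) * m^2 ≤ (n:ℝ) * P^(d-1) := by
    have hdd : d - 1 = 2 + (d - 3) := by omega
    calc C * ρ^(d-1) * m^2 = (C * (ρ^2 * m^2)) * ρ^(d-3) := by
          rw [hdd, pow_add]; ring
      _ ≤ ((n:ℝ) * P^2) * P^(d-3) := by
          apply mul_le_mul key2 (pow_le_pow_left₀ hρ0 hρP _) (by positivity) (by positivity)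
      _ = (n:ℝ) * P^(d-1) := by rw [hdd, pow_add]; ring
  have hA : (k:ℝ) * C = (n:ℝ) * ((n-1).choose (k-1) : ℝ) := by
    have h := Nat.add_one_mul_choose_eq (n-1) (k-1)
    have e1 : (n-1) + 1 = n := by omega
    have e2 : (n-1) + 1 = n := by omega
    have e3 : (k-1) + 1 = k := by omega
    rw [e1] at h
    rw [e3] at h
    -- h : n * (n-1).choose (k-1) = n.choose k * k
    have := congrArg (fun x : ℕ => (x : ℝ)) h
    push_cast at this
    rw [hCdef]; linarith
  rw [← mul_le_mul_iff_right₀ hn0]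
  calc (n:ℝ) * (((n-1).choose (k-1) : ℝ) * ρ^(d-1) * m^2)
      = ((n:ℝ) * ((n-1).choose (k-1) : ℝ)) * (ρ^(d-1) * m^2) := by ring
    _ = ((k:ℝ) * C) * (ρ^(d-1) * m^2) := by rw [hA]
    _ = (k:ℝ) * (C * ρ^(d-1) * m^2) := by ring
    _ ≤ (k:ℝ) * ((n:ℝ) * P^(d-1)) := by
        apply mul_le_mul_of_nonneg_left key3 (by positivity)
    _ = (n:ℝ) * ((k:ℝ) * P^(d-1)) := by ring

lemma cu_bound (d n k : ℕ) (hd : 3 ≤ d) (h1 : 1 ≤ k) (h2 : k < n) :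
    ((n-1).choose (k-1) : ℝ) * ((oddDF (n-k) : ℝ) / (k ! : ℝ)) ^ (d-1) * 2^k * Bnd d k
      ≤ (k:ℝ) * (oddDF n : ℝ)^(d-1) / (2*(n:ℝ)-1)^2 := by
  have hn2 : 2 ≤ n := by omega
  have hm0 : (0:ℝ) < 2*(n:ℝ)-1 := by
    have : (2:ℝ) ≤ (n:ℝ) := by exact_mod_cast hn2
    linarith
  rw [le_div_iff₀ (by positivity)]
  have hF : (0:ℝ) < (k ! : ℝ) := by exact_mod_cast Nat.factorial_pos k
  have h2k : (0:ℝ) < (2:ℝ)^k := by positivity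
  have hsimp : ((n-1).choose (k-1) : ℝ) * ((oddDF (n-k) : ℝ) / (k ! : ℝ)) ^ (d-1) * 2^k * Bnd d k
      = ((n-1).choose (k-1) : ℝ) * ((oddDF k : ℝ) * (oddDF (n-k) : ℝ))^(d-1) := by
    unfold Bnd
    rw [div_pow, mul_pow]
    field_simp
  rw [hsimp]
  exact key_real d n k hd h1 h2

lemma tw_bound (d n k : ℕ) (hd : 3 ≤ d) (h1 : 1 ≤ k) (h2 : k < n) :
    ((k:ℝ)/(n:ℝ)) * (n.choose k : ℝ)^d * Bnd d k * Bnd d (n-k)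
      ≤ (k:ℝ) / (2*(n:ℝ)-1)^2 * Bnd d n := by
  have hn2 : 2 ≤ n := by omega
  have hn0 : (0:ℝ) < (n:ℝ) := by exact_mod_cast (by omega : 0 < n)
  have hm0 : (0:ℝ) < 2*(n:ℝ)-1 := by
    have : (2:ℝ) ≤ (n:ℝ) := by exact_mod_cast hn2
    linarith
  have hFk : (0:ℝ) < (k ! : ℝ) := by exact_mod_cast Nat.factorial_pos k
  have hFnk : (0:ℝ) < ((n-k)! : ℝ) := by exact_mod_cast Nat.factorial_pos (n-k)
  have hFn : (0:ℝ) < (n ! : ℝ) := by exact_mod_cast Nat.factorial_pos n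
  have hCF : (n.choose k : ℝ) * (k ! : ℝ) * ((n-k)! : ℝ) = (n ! : ℝ) := by
    exact_mod_cast congrArg (fun x : ℕ => (x:ℝ))
      (Nat.choose_mul_factorial_mul_factorial h2.le)
  have hA : (k:ℝ) * (n.choose k : ℝ) = (n:ℝ) * ((n-1).choose (k-1) : ℝ) := by
    have h := Nat.add_one_mul_choose_eq (n-1) (k-1)
    have e1 : (n-1) + 1 = n := by omega
    have e3 : (k-1) + 1 = k := by omega
    rw [e1] at h
    rw [e3] at h
    have := congrArg (fun x : ℕ => (x : ℝ)) h
    push_cast at this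
    linarith
  have h2n : (2:ℝ)^k * (2:ℝ)^(n-k) = 2^n := by
    rw [← pow_add]
    congr 1
    omega
  have hCd : (n.choose k : ℝ)^d = (n.choose k : ℝ)^(d-1) * (n.choose k : ℝ) := by
    rw [← pow_succ]
    congr 1
    omega
  have hL : ((k:ℝ)/(n:ℝ)) * (n.choose k : ℝ)^d * Bnd d k * Bnd d (n-k)
      = ((2:ℝ)^n)⁻¹ * (n ! : ℝ)^(d-1) *
        (((n-1).choose (k-1) : ℝ) * ((oddDF k : ℝ) * (oddDF (n-k) : ℝ))^(d-1)) := by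
    unfold Bnd
    rw [hCd]
    have hkn : (k:ℝ)/(n:ℝ) * (n.choose k : ℝ) = ((n-1).choose (k-1) : ℝ) := by
      field_simp
      linarith [hA]
    have hpow : (n.choose k : ℝ)^(d-1) * (k ! : ℝ)^(d-1) * ((n-k)! : ℝ)^(d-1)
        = (n ! : ℝ)^(d-1) := by
      rw [← mul_pow, ← mul_pow, hCF]
    calc ((k:ℝ)/(n:ℝ)) * ((n.choose k : ℝ)^(d-1) * (n.choose k : ℝ)) *
          (((2:ℝ)^k)⁻¹ * (oddDF k : ℝ)^(d-1) * (k ! : ℝ)^(d-1)) *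
          (((2:ℝ)^(n-k))⁻¹ * (oddDF (n-k) : ℝ)^(d-1) * ((n-k)! : ℝ)^(d-1))
        = ((k:ℝ)/(n:ℝ) * (n.choose k : ℝ)) * (((2:ℝ)^k)⁻¹ * ((2:ℝ)^(n-k))⁻¹) *
          ((n.choose k : ℝ)^(d-1) * (k ! : ℝ)^(d-1) * ((n-k)! : ℝ)^(d-1)) *
          ((oddDF k : ℝ)^(d-1) * (oddDF (n-k) : ℝ)^(d-1)) := by ring
      _ = ((n-1).choose (k-1) : ℝ) * ((2:ℝ)^n)⁻¹ *
          ((n ! : ℝ)^(d-1)) * ((oddDF k : ℝ)^(d-1) * (oddDF (n-k) : ℝ)^(d-1)) := by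
          rw [hkn, hpow, ← mul_inv, h2n]
      _ = ((2:ℝ)^n)⁻¹ * (n ! : ℝ)^(d-1) *
          (((n-1).choose (k-1) : ℝ) * ((oddDF k : ℝ) * (oddDF (n-k) : ℝ))^(d-1)) := by
          rw [mul_pow]; ring
  rw [hL]
  have hR : (k:ℝ) / (2*(n:ℝ)-1)^2 * Bnd d n
      = ((2:ℝ)^n)⁻¹ * (n ! : ℝ)^(d-1) * ((k:ℝ) * (oddDF n : ℝ)^(d-1) / (2*(n:ℝ)-1)^2) := by
    unfold Bnd
    ring
  rw [hR]
  apply mul_le_mul_of_nonneg_left _ (by positivity)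
  rw [le_div_iff₀ (by positivity)]
  exact key_real d n k hd h1 h2

set_option maxHeartbeats 1000000 in
theorem stmt16 (d : ℕ) (hd : 3 ≤ d) (u w : ℕ → ℝ) (hu1 : u 1 = 1)
    (hurec : ∀ n : ℕ, 1 < n →
      (oddDF (n - 1) : ℝ) ^ (d - 1) +
        ∑ k ∈ Finset.Icc 2 n,
          ((n - 1).choose (k - 1) : ℝ) * ((oddDF (n - k) : ℝ) / (k ! : ℝ)) ^ (d - 1) *
            2 ^ k * u k =
        (oddDF n : ℝ) ^ (d - 1))
    (hwrec : ∀ n : ℕ, 1 ≤ n →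
      w n = u n + ∑ k ∈ Finset.Icc 1 (n - 1),
        ((k : ℝ) / n) * (n.choose k : ℝ) ^ d * u k * w (n - k)) :
    ∀ n : ℕ, 1 ≤ n →
      w n - u n ≤ ((2 : ℝ) ^ n)⁻¹ * (oddDF n : ℝ) ^ (d - 1) * (n ! : ℝ) ^ (d - 1) := by
  suffices H : ∀ n : ℕ, (2 ≤ n → 0 ≤ u n ∧ u n ≤ Bnd d n) ∧
      (1 ≤ n → w n ≤ 2 * Bnd d n ∧ w n - u n ≤ Bnd d n) by
    intro n hn
    have h := ((H n).2 hn).2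
    unfold Bnd at h
    exact h
  intro n
  induction n using Nat.strong_induction_on with
  | _ n ih =>
  rcases Nat.lt_or_ge n 2 with hn2 | hn2
  · -- n = 0 or 1
    constructor
    · intro h; omega
    · intro h1
      have hn1 : n = 1 := by omega
      subst hn1
      have hw1 : w 1 = u 1 := by
        have h := hwrec 1 le_rfl
        simpa using h
      refine ⟨?_, ?_⟩
      · rw [hw1, hu1, Bnd_one]; norm_num
      · rw [hw1]; simp; linarith [Bnd_pos d 1]
  -- main case n ≥ 2
  have hn0 : (0:ℝ) < (n:ℝ) := by exact_mod_cast (by omega : 0 < n)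
  have hnR : (2:ℝ) ≤ (n:ℝ) := by exact_mod_cast hn2
  have hm0 : (0:ℝ) < 2*(n:ℝ)-1 := by linarith
  have hFn : (0:ℝ) < (n ! : ℝ) := by exact_mod_cast n.factorial_pos
  have hP0 : (0:ℝ) < (oddDF n : ℝ) := by exact_mod_cast oddDF_pos n
  have hO0 : (0:ℝ) < (oddDF (n-1) : ℝ) := by exact_mod_cast oddDF_pos (n-1)
  -- the u-part
  have hupart : 0 ≤ u n ∧ u n ≤ Bnd d n := by
    have hrec := hurec n (by omega)
    have hsplit : ∑ k ∈ Finset.Icc 2 n,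
          ((n - 1).choose (k - 1) : ℝ) * ((oddDF (n - k) : ℝ) / (k ! : ℝ)) ^ (d - 1) *
            2 ^ k * u k
        = (∑ k ∈ Finset.Icc 2 (n-1),
            ((n - 1).choose (k - 1) : ℝ) * ((oddDF (n - k) : ℝ) / (k ! : ℝ)) ^ (d - 1) *
              2 ^ k * u k)
          + ((n - 1).choose (n - 1) : ℝ) * ((oddDF (n - n) : ℝ) / (n ! : ℝ)) ^ (d - 1) *
              2 ^ n * u n := by
      have e : n = (n-1)+1 := by omega
      rw [e, Finset.sum_Icc_succ_top (by omega : 2 ≤ (n-1)+1), ← e]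
    have htop : ((n - 1).choose (n - 1) : ℝ) * ((oddDF (n - n) : ℝ) / (n ! : ℝ)) ^ (d - 1) *
          2 ^ n * u n
        = ((n ! : ℝ)^(d-1))⁻¹ * 2^n * u n := by
      rw [Nat.choose_self, Nat.sub_self, oddDF_zero]
      push_cast
      rw [one_div, inv_pow]
      ring
    rw [hsplit, htop] at hrec
    set S : ℝ := ∑ k ∈ Finset.Icc 2 (n-1),
        ((n - 1).choose (k - 1) : ℝ) * ((oddDF (n - k) : ℝ) / (k ! : ℝ)) ^ (d - 1) *
          2 ^ k * u k with hSdef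
    have hS0 : 0 ≤ S := by
      apply Finset.sum_nonneg
      intro k hk
      simp only [Finset.mem_Icc] at hk
      have hu0 : 0 ≤ u k := ((ih k (by omega)).1 (by omega)).1
      have hco : (0:ℝ) ≤ ((n - 1).choose (k - 1) : ℝ) * ((oddDF (n - k) : ℝ) / (k ! : ℝ)) ^ (d - 1) * 2 ^ k := by positivity
      exact mul_nonneg hco hu0
    have hSle : S ≤ ((n-2 : ℕ):ℝ) * ((n:ℝ) * (oddDF n : ℝ)^(d-1) / (2*(n:ℝ)-1)^2) := by
      have hb : ∀ k ∈ Finset.Icc 2 (n-1),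
          ((n - 1).choose (k - 1) : ℝ) * ((oddDF (n - k) : ℝ) / (k ! : ℝ)) ^ (d - 1) *
            2 ^ k * u k ≤ (n:ℝ) * (oddDF n : ℝ)^(d-1) / (2*(n:ℝ)-1)^2 := by
        intro k hk
        simp only [Finset.mem_Icc] at hk
        have hk1 : 1 ≤ k := by omega
        have hkn : k < n := by omega
        have hu := (ih k (by omega)).1 (by omega)
        have hco : (0:ℝ) ≤ ((n - 1).choose (k - 1) : ℝ) * ((oddDF (n - k) : ℝ) / (k ! : ℝ)) ^ (d - 1) * 2 ^ k := by positivity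
        calc ((n - 1).choose (k - 1) : ℝ) * ((oddDF (n - k) : ℝ) / (k ! : ℝ)) ^ (d - 1) *
              2 ^ k * u k
            ≤ ((n - 1).choose (k - 1) : ℝ) * ((oddDF (n - k) : ℝ) / (k ! : ℝ)) ^ (d - 1) *
              2 ^ k * Bnd d k := mul_le_mul_of_nonneg_left hu.2 hco
          _ ≤ (k:ℝ) * (oddDF n : ℝ)^(d-1) / (2*(n:ℝ)-1)^2 := cu_bound d n k hd hk1 hkn
          _ ≤ (n:ℝ) * (oddDF n : ℝ)^(d-1) / (2*(n:ℝ)-1)^2 := by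
              gcongr
      calc S ≤ (Finset.Icc 2 (n-1)).card • ((n:ℝ) * (oddDF n : ℝ)^(d-1) / (2*(n:ℝ)-1)^2) :=
            Finset.sum_le_card_nsmul _ _ _ hb
        _ = ((n-2 : ℕ):ℝ) * ((n:ℝ) * (oddDF n : ℝ)^(d-1) / (2*(n:ℝ)-1)^2) := by
            rw [Nat.card_Icc]
            have e : n - 1 + 1 - 2 = n - 2 := by omega
            rw [e, nsmul_eq_mul]
    have hodd : (oddDF n : ℝ) = (oddDF (n-1):ℝ) * (2*(n:ℝ)-1) := by
      have h := oddDF_succ (n-1)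
      have e : (n-1)+1 = n := by omega
      rw [e] at h
      have := congrArg (fun x : ℕ => (x:ℝ)) h
      push_cast at this
      rw [this]
      have e2 : ((n-1 : ℕ):ℝ) = (n:ℝ) - 1 := by
        rw [Nat.cast_sub (by omega)]; norm_num
      rw [e2]
      ring
    have hOm : (oddDF (n-1):ℝ)^(d-1) * (2*(n:ℝ)-1)^2 ≤ (oddDF n : ℝ)^(d-1) := by
      rw [hodd, mul_pow]
      apply mul_le_mul_of_nonneg_left _ (by positivity)
      apply pow_le_pow_right₀ (by linarith)
      omega
    -- combine: the coefficient of u n is positive and bounded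
    set c : ℝ := ((n ! : ℝ)^(d-1))⁻¹ * 2^n with hcdef
    have hc0 : (0:ℝ) < c := by rw [hcdef]; positivity
    have hm2 : (0:ℝ) < (2*(n:ℝ)-1)^2 := by positivity
    have hOle : (oddDF (n-1):ℝ)^(d-1) ≤ (oddDF n : ℝ)^(d-1) / (2*(n:ℝ)-1)^2 := by
      rw [le_div_iff₀ hm2]
      exact hOm
    have hsum_all : (oddDF (n-1):ℝ)^(d-1) + S ≤ (oddDF n : ℝ)^(d-1) := by
      have h1 : ((n-2 : ℕ):ℝ) = (n:ℝ) - 2 := by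
        rw [Nat.cast_sub (by omega)]; norm_num
      rw [h1] at hSle
      have h2 : (oddDF n : ℝ)^(d-1) / (2*(n:ℝ)-1)^2 + ((n:ℝ)-2) * ((n:ℝ) * (oddDF n : ℝ)^(d-1) / (2*(n:ℝ)-1)^2)
          ≤ (oddDF n : ℝ)^(d-1) := by
        have heq : (oddDF n : ℝ)^(d-1) / (2*(n:ℝ)-1)^2 + ((n:ℝ)-2) * ((n:ℝ) * (oddDF n : ℝ)^(d-1) / (2*(n:ℝ)-1)^2)
            = ((1 + ((n:ℝ)-2)*(n:ℝ)) * (oddDF n : ℝ)^(d-1)) / (2*(n:ℝ)-1)^2 := by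
          ring
        rw [heq, div_le_iff₀ hm2]
        have hfac : (1 + ((n:ℝ)-2)*(n:ℝ)) ≤ (2*(n:ℝ)-1)^2 := by nlinarith
        have hPe : (0:ℝ) ≤ (oddDF n : ℝ)^(d-1) := pow_nonneg hP0.le _
        nlinarith [mul_le_mul_of_nonneg_left hfac hPe]
      linarith
    have hOe : (0:ℝ) ≤ (oddDF (n-1) : ℝ)^(d-1) := pow_nonneg hO0.le _
    have h3 : 0 ≤ c * u n := by linarith
    have hcB : c * Bnd d n = (oddDF n : ℝ)^(d-1) := by
      rw [hcdef]
      unfold Bnd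
      field_simp
    have h4 : c * u n ≤ c * Bnd d n := by
      rw [hcB]
      linarith
    constructor
    · have hu : u n = (c * u n)/c := by field_simp
      rw [hu]
      exact div_nonneg h3 hc0.le
    · exact le_of_mul_le_mul_left h4 hc0
  refine ⟨fun _ => hupart, fun _ => ?_⟩
  have hw := hwrec n (by omega)
  have hsum_le : ∑ k ∈ Finset.Icc 1 (n-1),
      ((k:ℝ)/n) * (n.choose k : ℝ)^d * u k * w (n-k) ≤ Bnd d n := by
    have hterm : ∀ k ∈ Finset.Icc 1 (n-1), ((k:ℝ)/n) * (n.choose k : ℝ)^d * u k * w (n-k)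
        ≤ 4 * ((n:ℝ) / (2*(n:ℝ)-1)^2 * Bnd d n) := by
      intro k hk
      simp only [Finset.mem_Icc] at hk
      have hk1 : 1 ≤ k := hk.1
      have hkn : k < n := by omega
      have hu2 : 0 ≤ u k ∧ u k ≤ 2 * Bnd d k := by
        rcases Nat.eq_or_lt_of_le hk1 with h | h
        · rw [← h, hu1, Bnd_one]
          norm_num
        · have hu := (ih k (by omega)).1 (by omega)
          exact ⟨hu.1, by linarith [hu.2, (Bnd_pos d k).le]⟩
      have hwle : w (n-k) ≤ 2 * Bnd d (n-k) := ((ih (n-k) (by omega)).2 (by omega)).1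
      have hco : 0 ≤ ((k:ℝ)/n) * (n.choose k : ℝ)^d := by positivity
      calc ((k:ℝ)/n) * (n.choose k : ℝ)^d * u k * w (n-k)
          ≤ ((k:ℝ)/n) * (n.choose k : ℝ)^d * u k * (2 * Bnd d (n-k)) := by
            apply mul_le_mul_of_nonneg_left hwle
            exact mul_nonneg hco hu2.1
        _ ≤ ((k:ℝ)/n) * (n.choose k : ℝ)^d * (2 * Bnd d k) * (2 * Bnd d (n-k)) := by
            apply mul_le_mul_of_nonneg_right _
              (by linarith [(Bnd_pos d (n-k)).le] : (0:ℝ) ≤ 2 * Bnd d (n-k))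
            exact mul_le_mul_of_nonneg_left hu2.2 hco
        _ = 4 * (((k:ℝ)/n) * (n.choose k : ℝ)^d * Bnd d k * Bnd d (n-k)) := by ring
        _ ≤ 4 * ((k:ℝ) / (2*(n:ℝ)-1)^2 * Bnd d n) := by
            have := tw_bound d n k hd hk1 hkn
            linarith
        _ ≤ 4 * ((n:ℝ) / (2*(n:ℝ)-1)^2 * Bnd d n) := by
            gcongr
            exact (Bnd_pos d n).le
    calc ∑ k ∈ Finset.Icc 1 (n-1), ((k:ℝ)/n) * (n.choose k : ℝ)^d * u k * w (n-k)
        ≤ (Finset.Icc 1 (n-1)).card • (4 * ((n:ℝ) / (2*(n:ℝ)-1)^2 * Bnd d n)) :=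
          Finset.sum_le_card_nsmul _ _ _ hterm
      _ = ((n-1 : ℕ):ℝ) * (4 * ((n:ℝ) / (2*(n:ℝ)-1)^2 * Bnd d n)) := by
          rw [Nat.card_Icc]
          have e : n - 1 + 1 - 1 = n - 1 := by omega
          rw [e, nsmul_eq_mul]
      _ ≤ Bnd d n := by
          have hc1 : ((n-1 : ℕ):ℝ) = (n:ℝ) - 1 := by
            rw [Nat.cast_sub (by omega)]; norm_num
          rw [hc1]
          have heq2 : ((n:ℝ)-1) * (4 * ((n:ℝ) / (2*(n:ℝ)-1)^2 * Bnd d n))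
              = (4*(n:ℝ)*((n:ℝ)-1)*Bnd d n) / (2*(n:ℝ)-1)^2 := by ring
          rw [heq2, div_le_iff₀ (by positivity)]
          have h1 : 4*(n:ℝ)*((n:ℝ)-1) ≤ (2*(n:ℝ)-1)^2 := by nlinarith
          nlinarith [mul_le_mul_of_nonneg_right h1 (Bnd_pos d n).le]
  constructor
  · linarith [hupart.2]
  · linarith
end
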